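/- arXiv:2103.02855 — 6 statements merged into one kernel-verified Lean document; each statement's English description precedes it below -/
import Mathlib

section
/- Let Q ∈ St(n, r) = {Q ∈ ℝ^{n×r} : QᵀQ = I_r} be a point of the Stiefel manifold and suppose the index (i₀, j₀) is such that every tangent vector V ∈ T_Q St(n,r) satisfies V_{i₀ j₀} = 0. Then Q_{i₀ j₀} ∈ {+1, −1}. -/
open Matrix

/-- On the Stiefel manifold `St(n,r)`, if every tangent vector at `Q` vanishes at the
entry `(i₀, j₀)`, then `Q_{i₀ j₀} ∈ {1, -1}`. -/
theorem stmt_8 {n r : ℕ} (Q : Matrix (Fin n) (Fin r) ℝ) (hQ : Qᵀ * Q = 1)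
    (i₀ : Fin n) (j₀ : Fin r)
    (h : ∀ V : Matrix (Fin n) (Fin r) ℝ, Qᵀ * V + Vᵀ * Q = 0 → V i₀ j₀ = 0) :
    Q i₀ j₀ = 1 ∨ Q i₀ j₀ = -1 := by
  set P : Matrix (Fin n) (Fin n) ℝ := 1 - Q * Qᵀ with hP
  have hz : Qᵀ * P = 0 := by
    rw [hP, Matrix.mul_sub, Matrix.mul_one, ← Matrix.mul_assoc, hQ, Matrix.one_mul, sub_self]
  have hz' : P * Q = 0 := by
    rw [hP, Matrix.sub_mul, Matrix.one_mul, Matrix.mul_assoc, hQ, Matrix.mul_one, sub_self]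
  have hPt : Pᵀ = P := by
    rw [hP, transpose_sub, transpose_one, transpose_mul, transpose_transpose]
  -- Step 1: (Q * Qᵀ) i₀ i₀ = 1
  have h1 : (Q * Qᵀ) i₀ i₀ = 1 := by
    have ht := h (P * Matrix.single i₀ j₀ (1:ℝ)) ?_
    · have he : (P * Matrix.single i₀ j₀ (1:ℝ)) i₀ j₀ = P i₀ i₀ := by
        simp [mul_apply, Matrix.single, of_apply, mul_ite]
      rw [he, hP, Matrix.sub_apply, one_apply_eq] at ht
      linarith
    · rw [← Matrix.mul_assoc, transpose_mul, hPt, hz, Matrix.mul_assoc, hz']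
      simp
  -- Step 2: entries of row i₀ other than j₀ vanish
  have h2 : ∀ j : Fin r, j ≠ j₀ → Q i₀ j = 0 := by
    intro j hj
    have ht := h (Q * (Matrix.single j j₀ (1:ℝ) - Matrix.single j₀ j (1:ℝ))) ?_
    · have he : (Q * (Matrix.single j j₀ (1:ℝ) - Matrix.single j₀ j (1:ℝ))) i₀ j₀
          = Q i₀ j := by
        simp [mul_apply, Matrix.single, of_apply, mul_ite, Matrix.sub_apply, mul_sub,
          Finset.sum_sub_distrib, (Ne.symm hj), hj]
      rwa [he] at ht
    · rw [← Matrix.mul_assoc, hQ, Matrix.one_mul, transpose_mul, Matrix.mul_assoc, hQ,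
        Matrix.mul_one, transpose_sub]
      ext a b
      simp [Matrix.single, of_apply, Matrix.add_apply, Matrix.sub_apply, transpose_apply, and_comm]
  -- Step 3: conclude
  have h3 : (Q * Qᵀ) i₀ i₀ = Q i₀ j₀ * Q i₀ j₀ := by
    rw [mul_apply, Finset.sum_eq_single j₀]
    · simp
    · intro b _ hb
      simp [h2 b hb]
    · simp
  rw [h3] at h1
  exact mul_self_eq_one_iff.mp h1
end

section
/- Let H be a self-adjoint linear operator on a finite-dimensional inner product space with 2ω‖v‖² ≤ ⟨Hv, v⟩ ≤ M‖v‖² for all v (with ω, M > 0), let ω' ∈ [0, 1/2], and suppose V satisfies ‖(H + ω'I)V + g‖ ≤ η for some vector g and η ≥ 0. Then ⟨−g, V⟩ ≥ 2ω‖V‖² − η‖V‖, and ‖g‖ ≤ (M + 1)‖V‖ + η. -/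
/-- Inexact regularized Newton estimate: if `‖(H + ω'I)V + g‖ ≤ η` with `H` self-adjoint
and `2ω‖v‖² ≤ ⟨Hv, v⟩ ≤ M‖v‖²`, then `⟨-g, V⟩ ≥ 2ω‖V‖² - η‖V‖` and
`‖g‖ ≤ (M+1)‖V‖ + η`. -/
theorem stmt_13 {E : Type*} [NormedAddCommGroup E] [InnerProductSpace ℝ E]
    [FiniteDimensional ℝ E]
    (H : E →L[ℝ] E) (hsa : ∀ v w : E, (inner ℝ (H v) w : ℝ) = (inner ℝ v (H w) : ℝ))
    (ω M : ℝ) (hω : 0 < ω) (hM : 0 < M)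
    (hlow : ∀ v : E, 2 * ω * ‖v‖ ^ 2 ≤ (inner ℝ (H v) v : ℝ))
    (hup : ∀ v : E, (inner ℝ (H v) v : ℝ) ≤ M * ‖v‖ ^ 2)
    (ω' : ℝ) (hω'0 : 0 ≤ ω') (hω'1 : ω' ≤ 1 / 2)
    (V g : E) (η : ℝ) (hη : 0 ≤ η)
    (hres : ‖H V + ω' • V + g‖ ≤ η) :
    2 * ω * ‖V‖ ^ 2 - η * ‖V‖ ≤ (inner ℝ (-g) V : ℝ) ∧ ‖g‖ ≤ (M + 1) * ‖V‖ + η := by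
  have hpos : ∀ v : E, 0 ≤ (inner ℝ (H v) v : ℝ) := fun v =>
    le_trans (by positivity) (hlow v)
  -- operator norm bound: ‖H v‖ ≤ M ‖v‖
  have hHnorm : ∀ v : E, ‖H v‖ ≤ M * ‖v‖ := by
    intro v
    by_cases hz : H v = 0
    · rw [hz, norm_zero]; positivity
    · set w : E := (‖v‖ / ‖H v‖) • H v with hw
      have hHv : (0:ℝ) < ‖H v‖ := norm_pos_iff.mpr hz
      have hwn : ‖w‖ = ‖v‖ := by
        rw [hw, norm_smul, Real.norm_eq_abs, abs_of_nonneg (by positivity)]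
        field_simp
      have hpol : 4 * (inner ℝ (H v) w : ℝ)
          = (inner ℝ (H (v + w)) (v + w) : ℝ) - (inner ℝ (H (v - w)) (v - w) : ℝ) := by
        have h1 : (inner ℝ (H w) v : ℝ) = (inner ℝ (H v) w : ℝ) := by
          rw [hsa w v, real_inner_comm]
        simp only [map_add, map_sub, inner_add_left, inner_add_right,
          inner_sub_left, inner_sub_right, h1]
        ring
      have h2 : (inner ℝ (H (v + w)) (v + w) : ℝ) ≤ M * ‖v + w‖ ^ 2 := hup _
      have h3 : ‖v + w‖ ^ 2 ≤ 4 * ‖v‖ ^ 2 := by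
        have := norm_add_le v w
        calc ‖v + w‖ ^ 2 ≤ (‖v‖ + ‖w‖) ^ 2 := by
              apply pow_le_pow_left₀ (norm_nonneg _) this
          _ = 4 * ‖v‖ ^ 2 := by rw [hwn]; ring
      have h4 : 4 * (inner ℝ (H v) w : ℝ) ≤ 4 * (M * ‖v‖ ^ 2) := by
        rw [hpol]
        have := hpos (v - w)
        nlinarith [hup (v + w)]
      have h5 : (inner ℝ (H v) w : ℝ) = ‖v‖ * ‖H v‖ := by
        rw [hw, real_inner_smul_right, real_inner_self_eq_norm_sq]
        field_simp
      rw [h5] at h4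
      by_cases hv : v = 0
      · simp [hv] at h4 ⊢
      · have hvp : (0:ℝ) < ‖v‖ := norm_pos_iff.mpr hv
        nlinarith
  set r : E := H V + ω' • V + g with hr
  have hgE : g = r - H V - ω' • V := by rw [hr]; abel
  have hrV : (inner ℝ r V : ℝ) ≤ η * ‖V‖ :=
    le_trans (real_inner_le_norm r V) (by
      have := norm_nonneg V
      exact mul_le_mul_of_nonneg_right hres this)
  constructor
  · have hexp : (inner ℝ (-g) V : ℝ)
        = (inner ℝ (H V) V : ℝ) + ω' * ‖V‖ ^ 2 - (inner ℝ r V : ℝ) := by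
      rw [hgE]
      simp only [inner_neg_left, inner_sub_left, real_inner_smul_left,
        real_inner_self_eq_norm_sq]
      ring
    rw [hexp]
    have := hlow V
    nlinarith [mul_nonneg hω'0 (sq_nonneg ‖V‖)]
  · rw [hgE]
    have h1 : ‖r - H V - ω' • V‖ ≤ ‖r‖ + ‖H V‖ + ‖ω' • V‖ := by
      calc ‖r - H V - ω' • V‖ ≤ ‖r - H V‖ + ‖ω' • V‖ := norm_sub_le _ _
        _ ≤ ‖r‖ + ‖H V‖ + ‖ω' • V‖ := by
            have := norm_sub_le r (H V); linarith
    have h2 : ‖ω' • V‖ ≤ (1/2) * ‖V‖ := by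
      rw [norm_smul, Real.norm_eq_abs, abs_of_nonneg hω'0]
      exact mul_le_mul_of_nonneg_right hω'1 (norm_nonneg _)
    have h3 := hHnorm V
    have := norm_nonneg V
    linarith
end

section
/- Suppose X : ℝⁿ → ℝⁿ is locally Lipschitz at p, directionally differentiable at p (i.e., the one-sided limit X'(p; v) := lim_{t↓0} (X(p + tv) − X(p))/t exists for every v), and X(p) = 0. Then ‖X(p + v) − X'(p; v)‖ = o(‖v‖) as v → 0. -/
open Asymptotics

/-- The map `t ↦ c*t` sends `𝓝[>] 0` to `𝓝[>] 0` when `c > 0`. -/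
lemma aux_mul_tendsto {c : ℝ} (hc : 0 < c) :
    Filter.Tendsto (fun t : ℝ => c * t) (nhdsWithin 0 (Set.Ioi 0))
      (nhdsWithin 0 (Set.Ioi 0)) := by
  apply tendsto_nhdsWithin_of_tendsto_nhds_of_eventually_within
  · have : Filter.Tendsto (fun t : ℝ => c * t) (nhds 0) (nhds (c * 0)) :=
      (continuous_const.mul continuous_id).tendsto 0
    simpa using this.mono_left nhdsWithin_le_nhds
  · filter_upwards [self_mem_nhdsWithin] with t ht
    exact mul_pos hc ht

set_option maxHeartbeats 1000000 in
/-- B-differentiability at a zero: if `X` is locally Lipschitz at `p`, directionally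
differentiable at `p`, and `X p = 0`, then `‖X(p+v) - X'(p; v)‖ = o(‖v‖)` as `v → 0`. -/
theorem stmt_14 {n : ℕ} (X : EuclideanSpace ℝ (Fin n) → EuclideanSpace ℝ (Fin n))
    (p : EuclideanSpace ℝ (Fin n))
    (hlip : ∃ (K : NNReal) (U : Set (EuclideanSpace ℝ (Fin n))),
      U ∈ nhds p ∧ LipschitzOnWith K X U)
    (X' : EuclideanSpace ℝ (Fin n) → EuclideanSpace ℝ (Fin n))
    (hdir : ∀ v, Filter.Tendsto (fun t : ℝ => t⁻¹ • (X (p + t • v) - X p))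
      (nhdsWithin 0 (Set.Ioi 0)) (nhds (X' v)))
    (hzero : X p = 0) :
    (fun v => X (p + v) - X' v) =o[nhds 0] fun v => v := by
  classical
  obtain ⟨K, U, hU, hK⟩ := hlip
  obtain ⟨r, hr, hball⟩ := Metric.mem_nhds_iff.1 hU
  -- X' is K-Lipschitz
  have hX'lip : ∀ v w : EuclideanSpace ℝ (Fin n), ‖X' v - X' w‖ ≤ K * ‖v - w‖ := by
    intro v w
    have hten : Filter.Tendsto
        (fun t : ℝ => ‖(t⁻¹ • (X (p + t • v) - X p)) - (t⁻¹ • (X (p + t • w) - X p))‖)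
        (nhdsWithin 0 (Set.Ioi 0)) (nhds ‖X' v - X' w‖) :=
      ((hdir v).sub (hdir w)).norm
    refine le_of_tendsto hten ?_
    have hpos : 0 < r / (‖v‖ + ‖w‖ + 1) := by positivity
    have h1 : ∀ᶠ t : ℝ in nhdsWithin 0 (Set.Ioi 0), |t| < r / (‖v‖ + ‖w‖ + 1) := by
      have : ∀ᶠ t : ℝ in nhds (0:ℝ), |t| < r / (‖v‖ + ‖w‖ + 1) := by
        filter_upwards [Metric.ball_mem_nhds (0:ℝ) hpos] with t ht
        simpa [Real.dist_eq] using ht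
      exact this.filter_mono nhdsWithin_le_nhds
    filter_upwards [self_mem_nhdsWithin, h1] with t ht htr
    have ht0 : (0:ℝ) < t := ht
    have habs : t < r / (‖v‖ + ‖w‖ + 1) := by rwa [abs_of_pos ht0] at htr
    have hmemv : p + t • v ∈ U := by
      apply hball
      simp only [Metric.mem_ball, dist_eq_norm]
      have h2 : ‖p + t • v - p‖ = t * ‖v‖ := by
        simp [norm_smul, Real.norm_eq_abs, abs_of_pos ht0]
      rw [h2]
      calc t * ‖v‖ ≤ t * (‖v‖ + ‖w‖ + 1) := by nlinarith [norm_nonneg w]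
        _ < r := by
          rw [← lt_div_iff₀ (by positivity : (0:ℝ) < ‖v‖ + ‖w‖ + 1)]
          exact habs
    have hmemw : p + t • w ∈ U := by
      apply hball
      simp only [Metric.mem_ball, dist_eq_norm]
      have h2 : ‖p + t • w - p‖ = t * ‖w‖ := by
        simp [norm_smul, Real.norm_eq_abs, abs_of_pos ht0]
      rw [h2]
      calc t * ‖w‖ ≤ t * (‖v‖ + ‖w‖ + 1) := by nlinarith [norm_nonneg v]
        _ < r := by
          rw [← lt_div_iff₀ (by positivity : (0:ℝ) < ‖v‖ + ‖w‖ + 1)]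
          exact habs
    have hd := hK.norm_sub_le hmemv hmemw
    have heq : (t⁻¹ • (X (p + t • v) - X p)) - (t⁻¹ • (X (p + t • w) - X p))
        = t⁻¹ • (X (p + t • v) - X (p + t • w)) := by
      rw [← smul_sub]; congr 1; abel
    rw [heq, norm_smul, Real.norm_eq_abs]
    have hvw : ‖p + t • v - (p + t • w)‖ = t * ‖v - w‖ := by
      have h2 : p + t • v - (p + t • w) = t • (v - w) := by
        rw [smul_sub]; abel
      rw [h2, norm_smul, Real.norm_eq_abs, abs_of_pos ht0]
    calc |t⁻¹| * ‖X (p + t • v) - X (p + t • w)‖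
        ≤ |t⁻¹| * (K * (t * ‖v - w‖)) := by
          apply mul_le_mul_of_nonneg_left _ (abs_nonneg _)
          calc ‖X (p + t • v) - X (p + t • w)‖ ≤ K * ‖p + t • v - (p + t • w)‖ := hd
            _ = K * (t * ‖v - w‖) := by rw [hvw]
      _ = K * ‖v - w‖ := by
          rw [abs_of_pos (inv_pos.2 ht0)]
          field_simp
  -- X' 0 = 0
  have hX'0 : X' 0 = 0 := by
    have h0 : Filter.Tendsto
        (fun t : ℝ => t⁻¹ • (X (p + t • (0:EuclideanSpace ℝ (Fin n))) - X p))
        (nhdsWithin 0 (Set.Ioi 0)) (nhds (0:EuclideanSpace ℝ (Fin n))) := by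
      have h1 : (fun t : ℝ => t⁻¹ • (X (p + t • (0:EuclideanSpace ℝ (Fin n))) - X p))
          = fun _ => (0:EuclideanSpace ℝ (Fin n)) := by
        funext t; simp
      rw [h1]; exact tendsto_const_nhds
    exact tendsto_nhds_unique (hdir 0) h0
  -- positive homogeneity
  have hhom : ∀ (c : ℝ), 0 < c → ∀ v : EuclideanSpace ℝ (Fin n),
      X' (c • v) = c • X' v := by
    intro c hc v
    have hcomp : Filter.Tendsto (fun t : ℝ => (c * t)⁻¹ • (X (p + (c * t) • v) - X p))
        (nhdsWithin 0 (Set.Ioi 0)) (nhds (X' v)) :=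
      (hdir v).comp (aux_mul_tendsto hc)
    have h2 : Filter.Tendsto (fun t : ℝ => c • ((c * t)⁻¹ • (X (p + (c * t) • v) - X p)))
        (nhdsWithin 0 (Set.Ioi 0)) (nhds (c • X' v)) := hcomp.const_smul c
    have heq : ∀ᶠ t : ℝ in nhdsWithin 0 (Set.Ioi 0),
        c • ((c * t)⁻¹ • (X (p + (c * t) • v) - X p))
          = t⁻¹ • (X (p + t • (c • v)) - X p) := by
      filter_upwards [self_mem_nhdsWithin] with t ht
      have ht0 : (0:ℝ) < t := ht
      rw [smul_smul, mul_inv, ← mul_assoc, mul_inv_cancel₀ (ne_of_gt hc), one_mul,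
        smul_smul, mul_comm]
    have h3 : Filter.Tendsto (fun t : ℝ => t⁻¹ • (X (p + t • (c • v)) - X p))
        (nhdsWithin 0 (Set.Ioi 0)) (nhds (c • X' v)) :=
      Filter.Tendsto.congr' heq h2
    exact tendsto_nhds_unique (hdir (c • v)) h3
  -- main estimate
  rw [isLittleO_iff]
  intro ε hε
  set δ : ℝ := ε / (3 * (K + 1)) with hδdef
  have hδpos : 0 < δ := by positivity
  have hcomp : IsCompact (Metric.sphere (0:EuclideanSpace ℝ (Fin n)) 1) :=
    isCompact_sphere 0 1
  have hcover : Metric.sphere (0:EuclideanSpace ℝ (Fin n)) 1 ⊆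
      ⋃ u ∈ Metric.sphere (0:EuclideanSpace ℝ (Fin n)) 1, Metric.ball u δ := by
    intro u hu
    exact Set.mem_biUnion hu (Metric.mem_ball_self hδpos)
  obtain ⟨s, hs_sub, hs_fin, hs_cover⟩ := hcomp.elim_finite_subcover_image
    (fun u _ => Metric.isOpen_ball) hcover
  -- for each direction, a uniform time bound
  have hτ : ∀ u : EuclideanSpace ℝ (Fin n), ∃ τ > 0, ∀ t : ℝ, 0 < t → t < τ →
      ‖X (p + t • u) - t • X' u‖ ≤ (ε / 3) * t := by
    intro u
    have h := hdir u
    rw [Metric.tendsto_nhdsWithin_nhds] at h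
    obtain ⟨τ, hτ0, hτ⟩ := h (ε/3) (by positivity)
    refine ⟨τ, hτ0, fun t ht0 htτ => ?_⟩
    have hlt : dist (t⁻¹ • (X (p + t • u) - X p)) (X' u) < ε / 3 := by
      apply hτ ht0
      simpa [Real.dist_eq, abs_of_pos ht0] using htτ
    rw [dist_eq_norm, hzero, sub_zero] at hlt
    have heq : X (p + t • u) - t • X' u = t • (t⁻¹ • X (p + t • u) - X' u) := by
      rw [smul_sub, smul_smul, mul_inv_cancel₀ (ne_of_gt ht0), one_smul]
    rw [heq, norm_smul, Real.norm_eq_abs, abs_of_pos ht0, mul_comm]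
    exact mul_le_mul_of_nonneg_right (le_of_lt hlt) (le_of_lt ht0)
  choose τ hτpos hτbd using hτ
  -- the uniform τ over the finite set s
  set T : ℝ := if h : s.Nonempty then
      min (hs_fin.toFinset.inf' (by simpa using h) τ) (r/2) else r/2 with hT
  have hTpos : 0 < T := by
    rw [hT]
    split_ifs with h
    · refine lt_min ?_ (by positivity)
      rw [Finset.lt_inf'_iff]
      intro u hu
      exact hτpos u
    · positivity
  have hTr : T ≤ r / 2 := by
    rw [hT]; split_ifs with h
    · exact min_le_right _ _
    · exact le_refl _
  have hTτ : ∀ u ∈ s, T ≤ τ u := by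
    intro u hu
    rw [hT, dif_pos ⟨u, hu⟩]
    exact le_trans (min_le_left _ _) (Finset.inf'_le _ (by simpa using hu))
  -- conclude
  filter_upwards [Metric.ball_mem_nhds (0:EuclideanSpace ℝ (Fin n)) hTpos] with v hv
  rcases eq_or_ne v 0 with rfl | hv0
  · simp [hzero, hX'0]
  · have hnv : 0 < ‖v‖ := norm_pos_iff.2 hv0
    have hvT : ‖v‖ < T := by simpa [dist_eq_norm] using hv
    set t : ℝ := ‖v‖ with htdef
    set u₀ : EuclideanSpace ℝ (Fin n) := t⁻¹ • v with hu₀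
    have hu₀sph : u₀ ∈ Metric.sphere (0:EuclideanSpace ℝ (Fin n)) 1 := by
      simp only [Metric.mem_sphere, dist_zero_right, hu₀, norm_smul, Real.norm_eq_abs,
        abs_of_pos (inv_pos.2 hnv)]
      field_simp
      exact htdef.symm
    obtain ⟨u, hus, huδ⟩ := Set.mem_iUnion₂.1 (hs_cover hu₀sph)
    have huδ' : ‖u₀ - u‖ < δ := by simpa [dist_eq_norm] using huδ
    have husph : u ∈ Metric.sphere (0:EuclideanSpace ℝ (Fin n)) 1 := hs_sub hus
    have hunorm : ‖u‖ = 1 := by simpa using husph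
    have hveq : v = t • u₀ := by
      rw [hu₀, smul_smul, mul_inv_cancel₀ (ne_of_gt hnv), one_smul]
    have hX'v : X' v = t • X' u₀ := by
      nth_rewrite 1 [hveq]
      exact hhom t hnv u₀
    have hdecomp : X (p + v) - X' v
        = (X (p + t • u₀) - X (p + t • u)) + (X (p + t • u) - t • X' u)
          + t • (X' u - X' u₀) := by
      rw [hX'v]
      nth_rewrite 1 [hveq]
      rw [smul_sub]
      abel
    have hu₀norm : ‖u₀‖ = 1 := by simpa using hu₀sph
    have hmem₀ : p + t • u₀ ∈ U := by
      apply hball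
      simp only [Metric.mem_ball, dist_eq_norm]
      have h1 : ‖p + t • u₀ - p‖ = t := by
        have h2 : p + t • u₀ - p = t • u₀ := by abel
        rw [h2, norm_smul, Real.norm_eq_abs, abs_of_pos hnv, hu₀norm, mul_one]
      rw [h1]
      linarith
    have hmemu : p + t • u ∈ U := by
      apply hball
      simp only [Metric.mem_ball, dist_eq_norm]
      have h1 : ‖p + t • u - p‖ = t := by
        have h2 : p + t • u - p = t • u := by abel
        rw [h2, norm_smul, Real.norm_eq_abs, abs_of_pos hnv, hunorm, mul_one]
      rw [h1]
      linarith
    have hb1 : ‖X (p + t • u₀) - X (p + t • u)‖ ≤ K * (t * δ) := by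
      have hd := hK.norm_sub_le hmem₀ hmemu
      have h1 : ‖p + t • u₀ - (p + t • u)‖ = t * ‖u₀ - u‖ := by
        have h2 : p + t • u₀ - (p + t • u) = t • (u₀ - u) := by
          rw [smul_sub]; abel
        rw [h2, norm_smul, Real.norm_eq_abs, abs_of_pos hnv]
      calc ‖X (p + t • u₀) - X (p + t • u)‖ ≤ K * ‖p + t • u₀ - (p + t • u)‖ := hd
        _ = K * (t * ‖u₀ - u‖) := by rw [h1]
        _ ≤ K * (t * δ) := by
            apply mul_le_mul_of_nonneg_left _ (NNReal.coe_nonneg K)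
            exact mul_le_mul_of_nonneg_left (le_of_lt huδ') (le_of_lt hnv)
    have hb2 : ‖X (p + t • u) - t • X' u‖ ≤ (ε / 3) * t :=
      hτbd u t hnv (lt_of_lt_of_le hvT (hTτ u hus))
    have hb3 : ‖t • (X' u - X' u₀)‖ ≤ t * (K * δ) := by
      rw [norm_smul, Real.norm_eq_abs, abs_of_pos hnv]
      apply mul_le_mul_of_nonneg_left _ (le_of_lt hnv)
      calc ‖X' u - X' u₀‖ ≤ K * ‖u - u₀‖ := hX'lip u u₀
        _ ≤ K * δ := by
            apply mul_le_mul_of_nonneg_left _ (NNReal.coe_nonneg K)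
            rw [← norm_neg]; simpa [neg_sub] using le_of_lt huδ'
    have hKδ : (K:ℝ) * δ ≤ ε / 3 := by
      have h1 : (K:ℝ) * δ = ε * ((K:ℝ) / (3*((K:ℝ)+1))) := by rw [hδdef]; ring
      have h2 : (K:ℝ) / (3*((K:ℝ)+1)) ≤ 1/3 := by
        rw [div_le_div_iff₀ (by positivity) (by norm_num)]
        nlinarith [K.coe_nonneg]
      rw [h1]
      calc ε * ((K:ℝ)/(3*((K:ℝ)+1))) ≤ ε * (1/3) := by gcongr
        _ = ε/3 := by ring
    calc ‖X (p + v) - X' v‖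
        ≤ ‖X (p + t • u₀) - X (p + t • u)‖ + ‖X (p + t • u) - t • X' u‖
          + ‖t • (X' u - X' u₀)‖ := by
          rw [hdecomp]
          exact norm_add₃_le
      _ ≤ K * (t * δ) + (ε / 3) * t + t * (K * δ) := by gcongr
      _ ≤ (ε/3) * t + (ε / 3) * t + t * (ε/3) := by
          have h2 : (K:ℝ) * (t * δ) ≤ (ε/3) * t := by nlinarith
          have h3 : t * ((K:ℝ) * δ) ≤ t * (ε/3) :=
            mul_le_mul_of_nonneg_left hKδ (le_of_lt hnv)
          linarith
      _ = ε * t := by ring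
end

section
/- Let {H_k} be a sequence of invertible self-adjoint operators on ℝⁿ with ‖H_k⁻¹‖ ≤ λ, and suppose a sequence p_k → p_* and vectors V_k satisfy (with X : ℝⁿ → ℝⁿ locally Lipschitz, X(p_*) = 0, and the semismooth bound ‖X(p_*) − X(p_k) − H_k(p_* − p_k)‖ ≤ C‖p_k − p_*‖^{1+ν} holding for some ν ∈ (0,1], C > 0): ‖(H_k + ω_k I)V_k + X(p_k)‖ ≤ ‖X(p_k)‖^{1+ν̄}, where ω_k := ‖X(p_k)‖^{ν̄} ≤ 1/2 for ν̄ ∈ (0,1], and H_k + ω_k I also satisfies ‖(H_k + ω_k I)⁻¹‖ ≤ λ. If additionally X is L-Lipschitz near p_*, then ‖V_k − (p_* − p_k)‖ ≤ C'‖p_k − p_*‖^{1+min{ν, ν̄}} for some constant C' depending only on C, L, λ, ν, ν̄. -/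
/-- The inexact regularized semismooth Newton step `V_k` approximates the exact
displacement `p_* - p_k` with error `O(‖p_k - p_*‖^{1+min{ν,ν̄}})`. -/
theorem stmt_16 {n : ℕ} (X : EuclideanSpace ℝ (Fin n) → EuclideanSpace ℝ (Fin n))
    (pstar : EuclideanSpace ℝ (Fin n)) (hzero : X pstar = 0)
    (ν νb lam C L : ℝ) (hν : ν ∈ Set.Ioc (0 : ℝ) 1) (hνb : νb ∈ Set.Ioc (0 : ℝ) 1)
    (hlam : 0 < lam) (hC : 0 < C) (hL : 0 < L)
    (ε : ℝ) (hε : 0 < ε)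
    (hLip : ∀ x ∈ Metric.ball pstar ε, ∀ y ∈ Metric.ball pstar ε,
      ‖X x - X y‖ ≤ L * ‖x - y‖)
    (p : ℕ → EuclideanSpace ℝ (Fin n))
    (hp : Filter.Tendsto p Filter.atTop (nhds pstar))
    (H : ℕ → EuclideanSpace ℝ (Fin n) →L[ℝ] EuclideanSpace ℝ (Fin n))
    (hsa : ∀ k, ∀ v w, (inner ℝ (H k v) w : ℝ) = (inner ℝ v (H k w) : ℝ))
    (Hinv : ℕ → EuclideanSpace ℝ (Fin n) →L[ℝ] EuclideanSpace ℝ (Fin n))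
    (hHinv : ∀ k, (H k).comp (Hinv k) = ContinuousLinearMap.id ℝ _ ∧
      (Hinv k).comp (H k) = ContinuousLinearMap.id ℝ _ ∧ ‖Hinv k‖ ≤ lam)
    (ω : ℕ → ℝ) (hω : ∀ k, ω k = ‖X (p k)‖ ^ νb) (hωhalf : ∀ k, ω k ≤ 1 / 2)
    (Ginv : ℕ → EuclideanSpace ℝ (Fin n) →L[ℝ] EuclideanSpace ℝ (Fin n))
    (hGinv : ∀ k,
      (H k + ω k • ContinuousLinearMap.id ℝ _).comp (Ginv k) = ContinuousLinearMap.id ℝ _ ∧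
      (Ginv k).comp (H k + ω k • ContinuousLinearMap.id ℝ _) = ContinuousLinearMap.id ℝ _ ∧
      ‖Ginv k‖ ≤ lam)
    (hsemi : ∀ k, ‖X pstar - X (p k) - H k (pstar - p k)‖ ≤ C * ‖p k - pstar‖ ^ (1 + ν))
    (V : ℕ → EuclideanSpace ℝ (Fin n))
    (hres : ∀ k, ‖H k (V k) + ω k • V k + X (p k)‖ ≤ ‖X (p k)‖ ^ (1 + νb)) :
    ∃ C' > (0 : ℝ), ∀ᶠ k in Filter.atTop,
      ‖V k - (pstar - p k)‖ ≤ C' * ‖p k - pstar‖ ^ (1 + min ν νb) := by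

  obtain ⟨hν0, hν1⟩ := hν
  obtain ⟨hνb0, hνb1⟩ := hνb
  set m := min ν νb with hm
  have hm0 : 0 < m := lt_min hν0 hνb0
  refine ⟨lam * (L ^ (1 + νb) + C + L ^ νb), by positivity, ?_⟩
  obtain ⟨N, hN⟩ := (Metric.tendsto_atTop.mp hp) (min ε 1) (lt_min hε one_pos)
  rw [Filter.eventually_atTop]
  refine ⟨N, fun k hk => ?_⟩
  have hdist := hN k hk
  have hball : p k ∈ Metric.ball pstar ε := by
    rw [Metric.mem_ball]; exact lt_of_lt_of_le hdist (min_le_left _ _)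
  set d := ‖p k - pstar‖ with hd
  have hd1 : d ≤ 1 := by
    have : dist (p k) pstar < 1 := lt_of_lt_of_le hdist (min_le_right _ _)
    rw [dist_eq_norm] at this; exact le_of_lt this
  have hd0 : 0 ≤ d := norm_nonneg _
  have hXd : ‖X (p k)‖ ≤ L * d := by
    have := hLip (p k) hball pstar (Metric.mem_ball_self hε)
    rwa [hzero, sub_zero] at this
  rcases eq_or_lt_of_le hd0 with hd00 | hdpos
  · -- degenerate case d = 0
    have hpe : p k = pstar := by
      have h0 : p k - pstar = 0 := by rw [← norm_eq_zero, ← hd, ← hd00]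
      exact sub_eq_zero.mp h0
    have hX0 : X (p k) = 0 := by rw [hpe, hzero]
    have hω0 : ω k = 0 := by
      rw [hω k, hX0, norm_zero, Real.zero_rpow (ne_of_gt hνb0)]
    have hHV : H k (V k) = 0 := by
      have := hres k
      rw [hX0, hω0, zero_smul, add_zero, add_zero, norm_zero,
        Real.zero_rpow (by positivity : (1 : ℝ) + νb ≠ 0)] at this
      exact norm_le_zero_iff.mp this
    have hV0 : V k = 0 := by
      obtain ⟨_, hH2, _⟩ := hHinv k
      have := ContinuousLinearMap.ext_iff.mp hH2 (V k)
      simp only [ContinuousLinearMap.comp_apply, ContinuousLinearMap.id_apply] at this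
      rw [← this, hHV, map_zero]
    rw [hV0, hpe, sub_self, sub_zero, norm_zero]
    positivity
  · -- main case 0 < d
    set e := pstar - p k with he
    have hne : ‖e‖ = d := by rw [he, hd, norm_sub_rev]
    have hω0 : 0 ≤ ω k := by rw [hω k]; positivity
    obtain ⟨hG1, hG2, hG3⟩ := hGinv k
    set G := H k + ω k • ContinuousLinearMap.id ℝ (EuclideanSpace ℝ (Fin n)) with hG
    have hGapp : ∀ v, Ginv k (G v) = v := fun v => by
      have := ContinuousLinearMap.ext_iff.mp hG2 v
      simpa using this
    have hGv : ∀ v, G v = H k v + ω k • v := fun v => by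
      simp [hG, ContinuousLinearMap.add_apply]
    have key : G (V k - e)
        = (H k (V k) + ω k • V k + X (p k)) + (X pstar - X (p k) - H k e) - ω k • e := by
      rw [hGv, hzero, map_sub, smul_sub]
      abel
    have hGle : ‖G (V k - e)‖
        ≤ ‖X (p k)‖ ^ (1 + νb) + C * d ^ (1 + ν) + ω k * d := by
      rw [key]
      calc ‖(H k (V k) + ω k • V k + X (p k)) + (X pstar - X (p k) - H k e) - ω k • e‖
          ≤ ‖(H k (V k) + ω k • V k + X (p k)) + (X pstar - X (p k) - H k e)‖ + ‖ω k • e‖ :=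
            norm_sub_le _ _
        _ ≤ ‖H k (V k) + ω k • V k + X (p k)‖ + ‖X pstar - X (p k) - H k e‖ + ‖ω k • e‖ := by
            gcongr; exact norm_add_le _ _
        _ ≤ ‖X (p k)‖ ^ (1 + νb) + C * d ^ (1 + ν) + ω k * d := by
            have h1 := hres k
            have h2 := hsemi k
            have h3 : ‖ω k • e‖ = ω k * d := by
              rw [norm_smul, Real.norm_eq_abs, abs_of_nonneg hω0, hne]
            rw [h3]
            gcongr
    have hmain : ‖V k - e‖ ≤ lam * ‖G (V k - e)‖ := by
      calc ‖V k - e‖ = ‖Ginv k (G (V k - e))‖ := by rw [hGapp]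
        _ ≤ ‖Ginv k‖ * ‖G (V k - e)‖ := (Ginv k).le_opNorm _
        _ ≤ lam * ‖G (V k - e)‖ := by gcongr
    -- now bound each term by d^(1+m)
    have hdm : ∀ s : ℝ, m ≤ s → d ^ (1 + s) ≤ d ^ (1 + m) := fun s hs =>
      Real.rpow_le_rpow_of_exponent_ge hdpos hd1 (by linarith)
    have hT1 : ‖X (p k)‖ ^ (1 + νb) ≤ L ^ (1 + νb) * d ^ (1 + m) := by
      calc ‖X (p k)‖ ^ (1 + νb) ≤ (L * d) ^ (1 + νb) :=
            Real.rpow_le_rpow (norm_nonneg _) hXd (by linarith)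
        _ = L ^ (1 + νb) * d ^ (1 + νb) := Real.mul_rpow hL.le hd0
        _ ≤ L ^ (1 + νb) * d ^ (1 + m) := by
            have := hdm νb (min_le_right _ _)
            gcongr
    have hT2 : C * d ^ (1 + ν) ≤ C * d ^ (1 + m) := by
      have := hdm ν (min_le_left _ _)
      gcongr
    have hT3 : ω k * d ≤ L ^ νb * d ^ (1 + m) := by
      calc ω k * d = ‖X (p k)‖ ^ νb * d := by rw [hω k]
        _ ≤ (L * d) ^ νb * d := by
            gcongr
        _ = L ^ νb * d ^ (1 + νb) := by
            rw [Real.mul_rpow hL.le hd0, mul_assoc, ← Real.rpow_add_one (ne_of_gt hdpos),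
              add_comm]
        _ ≤ L ^ νb * d ^ (1 + m) := by
            have := hdm νb (min_le_right _ _)
            gcongr
    calc ‖V k - e‖ ≤ lam * ‖G (V k - e)‖ := hmain
      _ ≤ lam * (‖X (p k)‖ ^ (1 + νb) + C * d ^ (1 + ν) + ω k * d) := by gcongr
      _ ≤ lam * (L ^ (1 + νb) * d ^ (1 + m) + C * d ^ (1 + m) + L ^ νb * d ^ (1 + m)) := by
          gcongr
      _ = lam * (L ^ (1 + νb) + C + L ^ νb) * d ^ (1 + m) := by ring
end

section
/- Let f : [0,1] → ℝ be continuously differentiable with L-Lipschitz derivative f'. Then there exist ξ ∈ (0,1) and a real number M in the Clarke generalized second derivative set ∂²f(ξ) (the convex hull of limits of f''(t_k) over differentiability points t_k → ξ of f') such that f(1) − f(0) = f'(0) + M/2. -/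
open MeasureTheory Filter Set Topology intervalIntegral

lemma my_deriv_bound {K : NNReal} {G : ℝ → ℝ} (hG : LipschitzWith K G) (t : ℝ) :
    |deriv G t| ≤ K := by
  by_cases hd : DifferentiableAt ℝ G t
  · have h1 : HasFDerivAt G (fderiv ℝ G t) t := hd.hasFDerivAt
    have h2 : ‖fderiv ℝ G t‖ ≤ K :=
      h1.le_of_lipschitzOn (s := Set.univ) univ_mem (lipschitzOnWith_univ.2 hG)
    have h3 : deriv G t = fderiv ℝ G t 1 := by
      rw [← derivWithin_univ, ← fderivWithin_univ]; rfl
    calc |deriv G t| = ‖fderiv ℝ G t 1‖ := by rw [h3]; rfl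
    _ ≤ ‖fderiv ℝ G t‖ * ‖(1:ℝ)‖ := (fderiv ℝ G t).le_opNorm 1
    _ ≤ K := by simpa using h2
  · simp [deriv_zero_of_not_differentiableAt hd]

lemma my_slope_seq {G : ℝ → ℝ} {x d : ℝ} (h : HasDerivAt G d x) {u : ℕ → ℝ}
    (hu : Tendsto u atTop (𝓝 0)) (hu' : ∀ n, u n ≠ 0) :
    Tendsto (fun n => (G (x + u n) - G x) / u n) atTop (𝓝 d) := by
  have h1 : Tendsto (slope G x) (𝓝[≠] x) (𝓝 d) := hasDerivAt_iff_tendsto_slope.1 h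
  have h2 : Tendsto (fun n => x + u n) atTop (𝓝[≠] x) := by
    apply tendsto_nhdsWithin_of_tendsto_nhds_of_eventually_within
    · simpa using (tendsto_const_nhds (x := x)).add hu
    · filter_upwards with n
      simp [hu' n]
  have := h1.comp h2
  convert this using 2 with n
  simp [slope, Function.comp, div_eq_inv_mul]

lemma my_ftc {K : NNReal} {G : ℝ → ℝ} (hG : LipschitzWith K G) {a b : ℝ} (hab : a ≤ b) :
    ∫ t in Set.Ioc a b, deriv G t = G b - G a := by
  have hGc : Continuous G := hG.continuous
  have hInt : ∀ x y : ℝ, IntervalIntegrable G volume x y := fun x y =>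
    hGc.intervalIntegrable x y
  set F : ℝ → ℝ := fun x => ∫ t in (0:ℝ)..x, G t with hFdef
  have hF : ∀ x : ℝ, HasDerivAt F (G x) x := fun x =>
    (hGc.integral_hasStrictDerivAt 0 x).hasDerivAt
  have hFsub : ∀ x y : ℝ, (∫ t in x..y, G t) = F y - F x := by
    intro x y
    have := integral_add_adjacent_intervals (hInt 0 x) (hInt x y)
    simp only [hFdef]
    linarith [this]
  set h : ℕ → ℝ := fun n => ((n:ℝ)+1)⁻¹ with hhdef
  have hhpos : ∀ n, 0 < h n := fun n => by positivity
  have hh0 : Tendsto h atTop (𝓝 0) := by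
    simpa [hhdef, one_div] using tendsto_one_div_add_atTop_nhds_zero_nat (𝕜 := ℝ)
  have hhne : ∀ n, h n ≠ 0 := fun n => (hhpos n).ne'
  -- integral identity
  have key : ∀ n, (∫ t in Set.Ioc a b, (G (t + h n) - G t) / h n) =
      (F (b + h n) - F b) / h n - (F (a + h n) - F a) / h n := by
    intro n
    rw [← intervalIntegral.integral_of_le hab]
    have e1 : (∫ t in a..b, (G (t + h n) - G t) / h n)
        = ((∫ t in a..b, G (t + h n)) - ∫ t in a..b, G t) / h n := by
      rw [intervalIntegral.integral_div, intervalIntegral.integral_sub]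
      · exact (hGc.comp (continuous_id.add continuous_const)).intervalIntegrable a b
      · exact hInt a b
    have e2 : (∫ t in a..b, G (t + h n)) = ∫ t in (a + h n)..(b + h n), G t :=
      intervalIntegral.integral_comp_add_right (a := a) (b := b) G (h n)
    rw [e1, e2, hFsub, hFsub]
    ring
  -- limit of RHS
  have hlim : Tendsto (fun n => (F (b + h n) - F b) / h n - (F (a + h n) - F a) / h n)
      atTop (𝓝 (G b - G a)) :=
    (my_slope_seq (hF b) hh0 hhne).sub (my_slope_seq (hF a) hh0 hhne)
  -- DCT
  have hmeasderiv : AEStronglyMeasurable (deriv G) (volume.restrict (Set.Ioc a b)) :=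
    (measurable_deriv G).aestronglyMeasurable
  have hbound_int : Integrable (fun _ : ℝ => (K:ℝ)) (volume.restrict (Set.Ioc a b)) := by
    rw [integrable_const_iff]
    right
    exact isFiniteMeasure_restrict.2 measure_Ioc_lt_top.ne
  have hdct : Tendsto (fun n => ∫ t in Set.Ioc a b, (G (t + h n) - G t) / h n) atTop
      (𝓝 (∫ t in Set.Ioc a b, deriv G t)) := by
    apply tendsto_integral_of_dominated_convergence (fun _ => (K:ℝ)) _ hbound_int
    · intro n
      filter_upwards with t
      rw [Real.norm_eq_abs, abs_div, abs_of_pos (hhpos n)]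
      rw [div_le_iff₀ (hhpos n)]
      have := hG.dist_le_mul (t + h n) t
      rw [Real.dist_eq, Real.dist_eq] at this
      simpa [abs_of_pos (hhpos n)] using this
    · apply ae_restrict_of_ae
      filter_upwards [hG.ae_differentiableAt_of_real] with t ht
      exact my_slope_seq ht.hasDerivAt hh0 hhne
    · intro n
      exact ((hGc.comp (continuous_id.add continuous_const)).sub hGc).div_const
        (h n) |>.aestronglyMeasurable
  have := hdct
  simp only [key] at this
  exact tendsto_nhds_unique this hlim

lemma my_exists_nonneg {K : NNReal} {G : ℝ → ℝ} (hG : LipschitzWith K G) {a b : ℝ}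
    (hab : a < b) (hle : G a ≤ G b) :
    ∃ u ∈ Set.Ioo a b, DifferentiableAt ℝ G u ∧ 0 ≤ deriv G u := by
  by_contra hcon
  push_neg at hcon
  have hμ : volume.restrict (Set.Ioc a b) ≠ 0 := by
    rw [← Measure.measure_univ_ne_zero, Measure.restrict_apply_univ]
    simp [hab]
  haveI : NeBot (ae (volume.restrict (Set.Ioc a b))) := ae_neBot.2 hμ
  have hbne : (volume.restrict (Set.Ioc a b)) {b} = 0 := by
    apply le_antisymm _ zero_le
    rw [← Real.volume_singleton (a := b)]
    exact Measure.restrict_le_self _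
  have haeIoo : ∀ᵐ t ∂(volume.restrict (Set.Ioc a b)), t ∈ Set.Ioo a b := by
    have h1 : ∀ᵐ t ∂(volume.restrict (Set.Ioc a b)), t ∈ Set.Ioc a b :=
      ae_restrict_mem measurableSet_Ioc
    have h2 : ∀ᵐ t ∂(volume.restrict (Set.Ioc a b)), t ≠ b := by
      rw [ae_iff]
      convert hbne using 2
      ext t; simp
    filter_upwards [h1, h2] with t h1 h2
    exact ⟨h1.1, lt_of_le_of_ne h1.2 h2⟩
  have haed : ∀ᵐ t ∂(volume.restrict (Set.Ioc a b)), DifferentiableAt ℝ G t :=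
    ae_restrict_of_ae hG.ae_differentiableAt_of_real
  have haeneg : ∀ᵐ t ∂(volume.restrict (Set.Ioc a b)), deriv G t < 0 := by
    filter_upwards [haeIoo, haed] with t ht hd
    exact hcon t ht hd
  have hint : Integrable (deriv G) (volume.restrict (Set.Ioc a b)) := by
    refine ⟨(measurable_deriv G).aestronglyMeasurable, ?_⟩
    apply HasFiniteIntegral.mono (g := fun _ : ℝ => (K:ℝ))
    · rw [hasFiniteIntegral_const_iff]
      right
      exact isFiniteMeasure_restrict.2 measure_Ioc_lt_top.ne
    · filter_upwards with t
      rw [Real.norm_eq_abs]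
      calc |deriv G t| ≤ (K:ℝ) := my_deriv_bound hG t
      _ ≤ ‖(K:ℝ)‖ := le_abs_self _
  have heq : ∫ t in Set.Ioc a b, deriv G t = G b - G a := my_ftc hG hab.le
  have hle0 : ∫ t in Set.Ioc a b, deriv G t ≤ 0 :=
    integral_nonpos_of_ae (haeneg.mono fun t ht => ht.le)
  have hzero : ∫ t in Set.Ioc a b, deriv G t = 0 := le_antisymm hle0 (by linarith)
  have : (fun t => -deriv G t) =ᵐ[volume.restrict (Set.Ioc a b)] 0 := by
    rw [← MeasureTheory.integral_eq_zero_iff_of_nonneg_ae]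
    · simp [MeasureTheory.integral_neg, hzero]
    · filter_upwards [haeneg] with t ht
      simp [ht.le]
    · exact hint.neg
  have : ∀ᵐ t ∂(volume.restrict (Set.Ioc a b)), False := by
    filter_upwards [this, haeneg] with t h1 h2
    simp only [Pi.zero_apply, neg_eq_zero] at h1
    linarith
  exact (this.exists).choose_spec

lemma my_exists_nonpos {K : NNReal} {G : ℝ → ℝ} (hG : LipschitzWith K G) {a b : ℝ}
    (hab : a < b) (hle : G b ≤ G a) :
    ∃ u ∈ Set.Ioo a b, DifferentiableAt ℝ G u ∧ deriv G u ≤ 0 := by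
  have hGn : LipschitzWith K (fun t => -G t) := by
    apply LipschitzWith.of_dist_le_mul
    intro x y
    simpa [Real.dist_eq, abs_sub_comm, neg_sub_neg] using hG.dist_le_mul x y
  obtain ⟨u, hu, hd, hpos⟩ := my_exists_nonneg hGn hab (by simpa using hle)
  have hdG : DifferentiableAt ℝ G u := by
    have := hd.neg
    simpa using this
  refine ⟨u, hu, hdG, ?_⟩
  have : deriv (fun t => -G t) u = -deriv G u := deriv.neg
  rw [this] at hpos
  linarith

/-- Extraction at a local max: sequences of differentiability points with
nonnegative and nonpositive limit derivatives. -/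
lemma my_extract {K : NNReal} {G : ℝ → ℝ} (hG : LipschitzWith K G) {ξ δ0 : ℝ}
    (hδ0 : 0 < δ0) (hmax : ∀ t ∈ Set.Ioo (ξ - δ0) (ξ + δ0), G t ≤ G ξ) :
    ∃ aval bval : ℝ, 0 ≤ aval ∧ bval ≤ 0 ∧
      (∃ u : ℕ → ℝ, (∀ k, u k ∈ Set.Ioo (ξ - δ0) (ξ + δ0) ∧ DifferentiableAt ℝ G (u k)) ∧
        Tendsto u atTop (𝓝 ξ) ∧ Tendsto (fun k => deriv G (u k)) atTop (𝓝 aval)) ∧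
      (∃ v : ℕ → ℝ, (∀ k, v k ∈ Set.Ioo (ξ - δ0) (ξ + δ0) ∧ DifferentiableAt ℝ G (v k)) ∧
        Tendsto v atTop (𝓝 ξ) ∧ Tendsto (fun k => deriv G (v k)) atTop (𝓝 bval)) := by
  set δ : ℕ → ℝ := fun k => min (δ0/2) (((k:ℝ)+1)⁻¹) with hδdef
  have hδpos : ∀ k, 0 < δ k := fun k => lt_min (by linarith) (by positivity)
  have hδle : ∀ k, δ k ≤ δ0/2 := fun k => min_le_left _ _
  have hδk : ∀ k, δ k ≤ ((k:ℝ)+1)⁻¹ := fun k => min_le_right _ _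
  have hδ0' : Tendsto (fun k => ξ - δ k) atTop (𝓝 ξ) := by
    have h1 : Tendsto (fun k : ℕ => ((k:ℝ)+1)⁻¹) atTop (𝓝 0) := by
      simpa [one_div] using tendsto_one_div_add_atTop_nhds_zero_nat (𝕜 := ℝ)
    have h2 : Tendsto δ atTop (𝓝 0) :=
      squeeze_zero (fun k => (hδpos k).le) hδk h1
    simpa using (tendsto_const_nhds (x := ξ)).sub h2
  have hδ0'' : Tendsto (fun k => ξ + δ k) atTop (𝓝 ξ) := by
    have h1 : Tendsto (fun k : ℕ => ((k:ℝ)+1)⁻¹) atTop (𝓝 0) := by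
      simpa [one_div] using tendsto_one_div_add_atTop_nhds_zero_nat (𝕜 := ℝ)
    have h2 : Tendsto δ atTop (𝓝 0) :=
      squeeze_zero (fun k => (hδpos k).le) hδk h1
    simpa using (tendsto_const_nhds (x := ξ)).add h2
  -- left side: points with nonneg derivative
  have hL : ∀ k : ℕ, ∃ u ∈ Set.Ioo (ξ - δ k) ξ, DifferentiableAt ℝ G u ∧ 0 ≤ deriv G u := by
    intro k
    apply my_exists_nonneg hG (by linarith [hδpos k])
    apply hmax
    constructor <;> [linarith [hδle k, hδpos k]; linarith [hδpos k, hδ0]]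
  have hR : ∀ k : ℕ, ∃ v ∈ Set.Ioo ξ (ξ + δ k), DifferentiableAt ℝ G v ∧ deriv G v ≤ 0 := by
    intro k
    apply my_exists_nonpos hG (by linarith [hδpos k])
    apply hmax
    constructor <;> [linarith [hδpos k, hδ0]; linarith [hδle k, hδpos k]]
  choose u hu1 hu2 hu3 using hL
  choose v hv1 hv2 hv3 using hR
  have huIoo : ∀ k, u k ∈ Set.Ioo (ξ - δ0) (ξ + δ0) := fun k =>
    ⟨by linarith [(hu1 k).1, hδle k, hδpos k], by linarith [(hu1 k).2]⟩
  have hvIoo : ∀ k, v k ∈ Set.Ioo (ξ - δ0) (ξ + δ0) := fun k =>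
    ⟨by linarith [(hv1 k).1], by linarith [(hv1 k).2, hδle k, hδpos k]⟩
  have hutend : Tendsto u atTop (𝓝 ξ) :=
    tendsto_of_tendsto_of_tendsto_of_le_of_le hδ0' tendsto_const_nhds
      (fun k => (hu1 k).1.le) (fun k => (hu1 k).2.le)
  have hvtend : Tendsto v atTop (𝓝 ξ) :=
    tendsto_of_tendsto_of_tendsto_of_le_of_le tendsto_const_nhds hδ0''
      (fun k => (hv1 k).1.le) (fun k => (hv1 k).2.le)
  -- Bolzano-Weierstrass on derivatives
  have hbdd : Bornology.IsBounded (Set.Icc (-(K:ℝ)) (K:ℝ)) := Metric.isBounded_Icc _ _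
  have humem : ∀ k, deriv G (u k) ∈ Set.Icc (-(K:ℝ)) (K:ℝ) := fun k =>
    abs_le.1 (my_deriv_bound hG (u k))
  have hvmem : ∀ k, deriv G (v k) ∈ Set.Icc (-(K:ℝ)) (K:ℝ) := fun k =>
    abs_le.1 (my_deriv_bound hG (v k))
  obtain ⟨aval, -, φ, hφ, hφtend⟩ := tendsto_subseq_of_bounded hbdd humem
  obtain ⟨bval, -, ψ, hψ, hψtend⟩ := tendsto_subseq_of_bounded hbdd hvmem
  refine ⟨aval, bval, ?_, ?_, ⟨u ∘ φ, fun k => ⟨huIoo _, hu2 _⟩, hutend.comp hφ.tendsto_atTop,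
    hφtend⟩, ⟨v ∘ ψ, fun k => ⟨hvIoo _, hv2 _⟩, hvtend.comp hψ.tendsto_atTop, hψtend⟩⟩
  · exact le_of_tendsto_of_tendsto' tendsto_const_nhds hφtend (fun k => hu3 (φ k))
  · exact le_of_tendsto_of_tendsto' hψtend tendsto_const_nhds (fun k => hv3 (ψ k))

lemma my_lip_neg {K : NNReal} {G : ℝ → ℝ} (hG : LipschitzWith K G) :
    LipschitzWith K (fun t => -G t) := by
  apply LipschitzWith.of_dist_le_mul
  intro x y
  simpa [Real.dist_eq, abs_sub_comm, neg_sub_neg] using hG.dist_le_mul x y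


/-- One-dimensional generalized second-order Taylor theorem: for `f` continuously
differentiable with Lipschitz derivative on `[0,1]`, there are `ξ ∈ (0,1)` and `M` in
the Clarke generalized second derivative set at `ξ` with `f 1 - f 0 = f' 0 + M/2`. -/
theorem stmt_17 (f : ℝ → ℝ) (hf : ContDiff ℝ 1 f) (L : NNReal)
    (hLip : LipschitzOnWith L (deriv f) (Set.Icc 0 1)) :
    ∃ ξ ∈ Set.Ioo (0 : ℝ) 1, ∃ M ∈ convexHull ℝ
      {mval : ℝ | ∃ u : ℕ → ℝ, (∀ k, DifferentiableAt ℝ (deriv f) (u k)) ∧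
        Filter.Tendsto u Filter.atTop (nhds ξ) ∧
        Filter.Tendsto (fun k => deriv (deriv f) (u k)) Filter.atTop (nhds mval)},
      f 1 - f 0 = deriv f 0 + M / 2 := by
  have hfd : Differentiable ℝ f := hf.differentiable one_ne_zero
  have hdc : Continuous (deriv f) := hf.continuous_deriv le_rfl
  set A : ℝ := 2*(f 1 - f 0 - deriv f 0) with hA
  have hfinal : f 1 - f 0 = deriv f 0 + A / 2 := by rw [hA]; ring
  obtain ⟨G0, hG0, hEq⟩ := hLip.extend_real
  set Φ : ℝ → ℝ := fun t => G0 t - deriv f 0 - A*t with hΦdef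
  have hΦlip : LipschitzWith (L + ‖A‖₊) Φ := by
    have h1 : LipschitzWith ‖A‖₊ (fun t : ℝ => A*t) := by
      apply LipschitzWith.of_dist_le_mul
      intro x y
      simp only [Real.dist_eq, ← mul_sub, abs_mul]
      rfl
    have h2 : LipschitzWith L (fun t => G0 t - deriv f 0) := by
      apply LipschitzWith.of_dist_le_mul
      intro x y
      simpa [Real.dist_eq, sub_sub_sub_cancel_right] using hG0.dist_le_mul x y
    exact h2.sub h1
  have hΦeq : ∀ t ∈ Set.Icc (0:ℝ) 1, Φ t = deriv f t - deriv f 0 - A*t := fun t ht => by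
    simp only [hΦdef, ← hEq ht]
  -- translation from Φ to deriv f
  have htrans : ∀ w ∈ Set.Ioo (0:ℝ) 1, DifferentiableAt ℝ Φ w →
      DifferentiableAt ℝ (deriv f) w ∧ deriv (deriv f) w = deriv Φ w + A := by
    intro w hw hd
    have hnb : Set.Ioo (0:ℝ) 1 ∈ 𝓝 w := Ioo_mem_nhds hw.1 hw.2
    have hev : deriv f =ᶠ[𝓝 w] fun t => Φ t + deriv f 0 + A*t := by
      filter_upwards [hnb] with t ht
      have := hΦeq t ⟨ht.1.le, ht.2.le⟩
      linarith [this]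
    have hda : HasDerivAt (fun t => Φ t + deriv f 0 + A*t) (deriv Φ w + A) w := by
      have h1 : HasDerivAt (fun t : ℝ => A*t) A w := by
        simpa using (hasDerivAt_id w).const_mul A
      have h2 : HasDerivAt (fun t => Φ t + deriv f 0) (deriv Φ w) w :=
        hd.hasDerivAt.add_const _
      exact h2.add h1
    have hda' : HasDerivAt (deriv f) (deriv Φ w + A) w := hda.congr_of_eventuallyEq hev
    exact ⟨hda'.differentiableAt, hda'.deriv⟩
  -- Rolle setup
  set h : ℝ → ℝ := fun t => f t - f 0 - t*(deriv f 0) - A*t^2/2 with hhdef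
  have hh : ∀ t, HasDerivAt h (deriv f t - deriv f 0 - A*t) t := by
    intro t
    have h1 : HasDerivAt f (deriv f t) t := (hfd t).hasDerivAt
    have h2 : HasDerivAt (fun t : ℝ => t*(deriv f 0)) (deriv f 0) t := by
      simpa using (hasDerivAt_id t).mul_const (deriv f 0)
    have h3 : HasDerivAt (fun t : ℝ => A*t^2/2) (A*t) t := by
      have := ((hasDerivAt_pow 2 t).const_mul A).div_const 2
      exact this.congr_deriv (by norm_num; ring)
    exact ((h1.sub_const (f 0)).sub h2).sub h3
  have h01 : h 0 = h 1 := by simp only [hhdef, hA]; ring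
  obtain ⟨c, hcmem, hc0⟩ := exists_deriv_eq_zero zero_lt_one
    (Continuous.continuousOn (by fun_prop)) h01
  have hceq : deriv f c - deriv f 0 - A*c = 0 := by rw [← (hh c).deriv]; exact hc0
  have hΦ0 : Φ 0 = 0 := by
    rw [hΦeq 0 ⟨le_rfl, zero_le_one⟩]; ring
  have hΦc : Φ c = 0 := by
    rw [hΦeq c ⟨hcmem.1.le, hcmem.2.le⟩]; linarith
  -- max and min of Φ on [0, c]
  have hcompact : IsCompact (Set.Icc (0:ℝ) c) := isCompact_Icc
  have hne : (Set.Icc (0:ℝ) c).Nonempty := ⟨0, le_rfl, hcmem.1.le⟩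
  obtain ⟨p, hpmem, hpmax⟩ := hcompact.exists_isMaxOn hne hΦlip.continuous.continuousOn
  obtain ⟨q, hqmem, hqmin⟩ := hcompact.exists_isMinOn hne hΦlip.continuous.continuousOn
  rw [isMaxOn_iff] at hpmax
  rw [isMinOn_iff] at hqmin
  -- helper to conclude in the extremum cases
  have conclude : ∀ ξ ∈ Set.Ioo (0:ℝ) c, ∀ a' b' : ℝ, b' ≤ A → A ≤ a' →
      (∃ u : ℕ → ℝ, (∀ k, DifferentiableAt ℝ (deriv f) (u k)) ∧
        Tendsto u atTop (𝓝 ξ) ∧ Tendsto (fun k => deriv (deriv f) (u k)) atTop (𝓝 a')) →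
      (∃ v : ℕ → ℝ, (∀ k, DifferentiableAt ℝ (deriv f) (v k)) ∧
        Tendsto v atTop (𝓝 ξ) ∧ Tendsto (fun k => deriv (deriv f) (v k)) atTop (𝓝 b')) →
      ∃ ξ' ∈ Set.Ioo (0 : ℝ) 1, ∃ M ∈ convexHull ℝ
        {mval : ℝ | ∃ u : ℕ → ℝ, (∀ k, DifferentiableAt ℝ (deriv f) (u k)) ∧
          Tendsto u atTop (𝓝 ξ') ∧ Tendsto (fun k => deriv (deriv f) (u k)) atTop (𝓝 mval)},
        f 1 - f 0 = deriv f 0 + M / 2 := by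
    intro ξ hξ a' b' hb' ha' hu hv
    refine ⟨ξ, ⟨hξ.1, hξ.2.trans hcmem.2⟩, A, ?_, hfinal⟩
    apply segment_subset_convexHull (x := b') (y := a') hv hu
    rw [segment_eq_Icc (hb'.trans ha')]
    exact ⟨hb', ha'⟩
  by_cases hp : 0 < Φ p
  · -- interior max point
    have hp0 : p ≠ 0 := fun h => by rw [h, hΦ0] at hp; linarith
    have hpc : p ≠ c := fun h => by rw [h, hΦc] at hp; linarith
    have hpIoo : p ∈ Set.Ioo 0 c :=
      ⟨hpmem.1.lt_of_ne (Ne.symm hp0), hpmem.2.lt_of_ne hpc⟩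
    set δ0 : ℝ := min p (c - p) with hδ0def
    have hδ0pos : 0 < δ0 := lt_min hpIoo.1 (by linarith [hpIoo.2])
    have hmax : ∀ t ∈ Set.Ioo (p - δ0) (p + δ0), Φ t ≤ Φ p := by
      intro t ht
      apply hpmax
      constructor
      · have : δ0 ≤ p := min_le_left _ _
        linarith [ht.1]
      · have : δ0 ≤ c - p := min_le_right _ _
        linarith [ht.2]
    obtain ⟨aval, bval, haval, hbval, ⟨u, hu1, hu2, hu3⟩, ⟨v, hv1, hv2, hv3⟩⟩ :=
      my_extract hΦlip hδ0pos hmax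
    have hsub : Set.Ioo (p - δ0) (p + δ0) ⊆ Set.Ioo (0:ℝ) 1 := by
      intro t ht
      have h1 : δ0 ≤ p := min_le_left _ _
      have h2 : δ0 ≤ c - p := min_le_right _ _
      exact ⟨by linarith [ht.1], by linarith [ht.2, hcmem.2]⟩
    have hud : ∀ k, DifferentiableAt ℝ (deriv f) (u k) ∧
        deriv (deriv f) (u k) = deriv Φ (u k) + A := fun k =>
      htrans _ (hsub (hu1 k).1) (hu1 k).2
    have hvd : ∀ k, DifferentiableAt ℝ (deriv f) (v k) ∧
        deriv (deriv f) (v k) = deriv Φ (v k) + A := fun k =>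
      htrans _ (hsub (hv1 k).1) (hv1 k).2
    apply conclude p hpIoo (aval + A) (bval + A) (by linarith) (by linarith)
    · refine ⟨u, fun k => (hud k).1, hu2, ?_⟩
      have := hu3.add (tendsto_const_nhds (x := A))
      apply this.congr
      intro k
      exact ((hud k).2).symm
    · refine ⟨v, fun k => (hvd k).1, hv2, ?_⟩
      have := hv3.add (tendsto_const_nhds (x := A))
      apply this.congr
      intro k
      exact ((hvd k).2).symm
  · by_cases hq : Φ q < 0
    · -- interior min point: apply extraction to -Φ
      have hq0 : q ≠ 0 := fun h => by rw [h, hΦ0] at hq; linarith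
      have hqc : q ≠ c := fun h => by rw [h, hΦc] at hq; linarith
      have hqIoo : q ∈ Set.Ioo 0 c :=
        ⟨hqmem.1.lt_of_ne (Ne.symm hq0), hqmem.2.lt_of_ne hqc⟩
      set δ0 : ℝ := min q (c - q) with hδ0def
      have hδ0pos : 0 < δ0 := lt_min hqIoo.1 (by linarith [hqIoo.2])
      have hmax : ∀ t ∈ Set.Ioo (q - δ0) (q + δ0), (fun s => -Φ s) t ≤ (fun s => -Φ s) q := by
        intro t ht
        simp only [neg_le_neg_iff]
        apply hqmin
        constructor
        · have : δ0 ≤ q := min_le_left _ _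
          linarith [ht.1]
        · have : δ0 ≤ c - q := min_le_right _ _
          linarith [ht.2]
      obtain ⟨aval, bval, haval, hbval, ⟨u, hu1, hu2, hu3⟩, ⟨v, hv1, hv2, hv3⟩⟩ :=
        my_extract (my_lip_neg hΦlip) hδ0pos hmax
      have hsub : Set.Ioo (q - δ0) (q + δ0) ⊆ Set.Ioo (0:ℝ) 1 := by
        intro t ht
        have h1 : δ0 ≤ q := min_le_left _ _
        have h2 : δ0 ≤ c - q := min_le_right _ _
        exact ⟨by linarith [ht.1], by linarith [ht.2, hcmem.2]⟩
      have hudiff : ∀ k, DifferentiableAt ℝ Φ (u k) := by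
        intro k
        have := (hu1 k).2.neg
        simpa using this
      have hvdiff : ∀ k, DifferentiableAt ℝ Φ (v k) := by
        intro k
        have := (hv1 k).2.neg
        simpa using this
      have hderivneg : ∀ w, DifferentiableAt ℝ Φ w →
          deriv (fun s => -Φ s) w = -deriv Φ w := fun w _ => deriv.neg
      have hud : ∀ k, DifferentiableAt ℝ (deriv f) (u k) ∧
          deriv (deriv f) (u k) = deriv Φ (u k) + A := fun k =>
        htrans _ (hsub (hu1 k).1) (hudiff k)
      have hvd : ∀ k, DifferentiableAt ℝ (deriv f) (v k) ∧
          deriv (deriv f) (v k) = deriv Φ (v k) + A := fun k =>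
        htrans _ (hsub (hv1 k).1) (hvdiff k)
      -- deriv Φ (u k) = -(deriv (-Φ) (u k)) → -aval ≤ 0 ; deriv Φ (v k) → -bval ≥ 0
      apply conclude q hqIoo (-bval + A) (-aval + A) (by linarith) (by linarith)
      · refine ⟨v, fun k => (hvd k).1, hv2, ?_⟩
        have := (hv3.neg).add (tendsto_const_nhds (x := A))
        apply this.congr
        intro k
        rw [(hvd k).2, hderivneg _ (hvdiff k), neg_neg]
      · refine ⟨u, fun k => (hud k).1, hu2, ?_⟩
        have := (hu3.neg).add (tendsto_const_nhds (x := A))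
        apply this.congr
        intro k
        rw [(hud k).2, hderivneg _ (hudiff k), neg_neg]
    · -- Φ ≡ 0 on [0, c]
      push_neg at hp hq
      have hzero : ∀ t ∈ Set.Icc (0:ℝ) c, Φ t = 0 := fun t ht =>
        le_antisymm ((hpmax t ht).trans hp) (hq.trans (hqmin t ht))
      set ξ : ℝ := c/2 with hξdef
      have hξIoo : ξ ∈ Set.Ioo (0:ℝ) c := ⟨by linarith [hcmem.1], by linarith [hcmem.1]⟩
      have hev : deriv f =ᶠ[𝓝 ξ] fun t => deriv f 0 + A*t := by
        filter_upwards [Ioo_mem_nhds hξIoo.1 hξIoo.2] with t ht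
        have h1 := hzero t ⟨ht.1.le, ht.2.le⟩
        have h2 := hΦeq t ⟨ht.1.le, (ht.2.le.trans hcmem.2.le)⟩
        rw [h1] at h2
        linarith
      have hda : HasDerivAt (fun t => deriv f 0 + A*t) A ξ := by
        simpa using ((hasDerivAt_id ξ).const_mul A).const_add (deriv f 0)
      have hda' : HasDerivAt (deriv f) A ξ := hda.congr_of_eventuallyEq hev
      refine ⟨ξ, ⟨hξIoo.1, hξIoo.2.trans hcmem.2⟩, A, ?_, hfinal⟩
      apply subset_convexHull
      exact ⟨fun _ => ξ, fun _ => hda'.differentiableAt, tendsto_const_nhds, by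
        simpa [hda'.deriv] using (tendsto_const_nhds : Tendsto (fun _ : ℕ => A) atTop (𝓝 A))⟩
end

section
/- Let F : ℝᵈ → ℝ be continuously differentiable with locally Lipschitz gradient, and suppose x_* ∈ ℝᵈ satisfies ∇F(x_*) = 0 and every element of the Clarke generalized Jacobian ∂(∇F)(x_*) is positive definite. Then x_* is a strict local minimum of F; moreover there exist ω > 0 and a neighborhood U of x_* such that F(x) − F(x_*) ≥ ω‖x − x_*‖² for all x ∈ U. -/
open Metric Filter MeasureTheory Set
open scoped Topology NNReal

local notation "⟪" x ", " y "⟫" => @inner ℝ _ _ x y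

private lemma unif_pd {d : ℕ} (G : EuclideanSpace ℝ (Fin d) → EuclideanSpace ℝ (Fin d))
    (xstar : EuclideanSpace ℝ (Fin d)) {K : ℝ≥0} {R0 : ℝ} (hR0 : 0 < R0)
    (hlip : LipschitzOnWith K G (ball xstar R0))
    (hpd : ∀ Hb : EuclideanSpace ℝ (Fin d) →L[ℝ] EuclideanSpace ℝ (Fin d),
      (∃ (u : ℕ → EuclideanSpace ℝ (Fin d))
          (A : ℕ → EuclideanSpace ℝ (Fin d) →L[ℝ] EuclideanSpace ℝ (Fin d)),
          (∀ k, HasFDerivAt G (A k) (u k)) ∧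
          Tendsto u atTop (𝓝 xstar) ∧ Tendsto A atTop (𝓝 Hb)) →
      ∀ v : EuclideanSpace ℝ (Fin d), v ≠ 0 → 0 < ⟪Hb v, v⟫) :
    ∃ m > (0:ℝ), ∃ R > (0:ℝ), R ≤ R0 ∧ ∀ y ∈ ball xstar R, ∀ A : EuclideanSpace ℝ (Fin d) →L[ℝ] EuclideanSpace ℝ (Fin d), HasFDerivAt G A y →
      ∀ v : EuclideanSpace ℝ (Fin d), m * ‖v‖^2 ≤ ⟪A v, v⟫ := by
  by_contra hcon
  push_neg at hcon
  -- for each k, get a bad point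
  have hbad : ∀ k : ℕ, ∃ y ∈ ball xstar (min R0 (1/(k+1))), ∃ A : EuclideanSpace ℝ (Fin d) →L[ℝ] EuclideanSpace ℝ (Fin d), HasFDerivAt G A y ∧
      ∃ v : EuclideanSpace ℝ (Fin d), ⟪A v, v⟫ < (1/(k+1)) * ‖v‖^2 := by
    intro k
    have hk : (0:ℝ) < 1/(k+1) := by positivity
    obtain ⟨y, hy, A, hA, v, hv⟩ := hcon (1/(k+1)) hk (min R0 (1/(k+1)))
      (lt_min hR0 hk) (min_le_left _ _)
    exact ⟨y, hy, A, hA, v, hv⟩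
  choose y hy A hA v hv using hbad
  have hvne : ∀ k, v k ≠ 0 := by
    intro k h0
    have := hv k
    rw [h0] at this
    simp at this
  set w : ℕ → EuclideanSpace ℝ (Fin d) := fun k => ‖v k‖⁻¹ • v k with hw
  have hwnorm : ∀ k, ‖w k‖ = 1 := by
    intro k
    rw [hw]
    simp [norm_smul, inv_mul_cancel₀ (norm_ne_zero_iff.2 (hvne k))]
  have hwineq : ∀ k, ⟪(A k) (w k), w k⟫ < 1/(k+1) := by
    intro k
    have hsm : (A k) (w k) = ‖v k‖⁻¹ • (A k) (v k) := (A k).map_smul _ _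
    have h1 : ⟪(A k) (w k), w k⟫ = ‖v k‖⁻¹ * (‖v k‖⁻¹ * ⟪(A k) (v k), v k⟫) := by
      rw [hsm, hw]
      rw [real_inner_smul_left, real_inner_smul_right]
    have hnv : (0:ℝ) < ‖v k‖ := norm_pos_iff.2 (hvne k)
    have := hv k
    calc ⟪(A k) (w k), w k⟫ = ‖v k‖⁻¹ * ‖v k‖⁻¹ * ⟪(A k) (v k), v k⟫ := by rw [h1]; ring
    _ < ‖v k‖⁻¹ * ‖v k‖⁻¹ * ((1/(k+1)) * ‖v k‖^2) := by
        apply mul_lt_mul_of_pos_left this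
        positivity
    _ = (1/(k+1)) * (‖v k‖⁻¹ * ‖v k‖)^2 := by ring
    _ = 1/(k+1) := by rw [inv_mul_cancel₀ (ne_of_gt hnv)]; ring
  -- A k bounded by K
  have hAk : ∀ k, A k ∈ closedBall (0 : EuclideanSpace ℝ (Fin d) →L[ℝ] EuclideanSpace ℝ (Fin d)) K := by
    intro k
    rw [mem_closedBall_zero_iff]
    refine (hA k).le_of_lipschitzOn ?_ hlip
    refine isOpen_ball.mem_nhds ?_
    exact ball_subset_ball (min_le_left _ _) (hy k)
  obtain ⟨Hb, -, φ, hφ, hAφ⟩ :=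
    (isCompact_closedBall (0 : EuclideanSpace ℝ (Fin d) →L[ℝ] EuclideanSpace ℝ (Fin d)) K).tendsto_subseq hAk
  have hwmem : ∀ k, w (φ k) ∈ sphere (0 : EuclideanSpace ℝ (Fin d)) 1 := by
    intro k; rw [mem_sphere_zero_iff_norm]; exact hwnorm _
  obtain ⟨vb, hvbmem, φ', hφ', hvφ⟩ := (isCompact_sphere (0 : EuclideanSpace ℝ (Fin d)) 1).tendsto_subseq hwmem
  have hvbnorm : ‖vb‖ = 1 := mem_sphere_zero_iff_norm.1 hvbmem
  set σ : ℕ → ℕ := φ ∘ φ' with hσ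
  have hσmono : StrictMono σ := hφ.comp hφ'
  have hytend : Tendsto (fun k => y (σ k)) atTop (𝓝 xstar) := by
    rw [tendsto_iff_dist_tendsto_zero]
    apply squeeze_zero (fun k => dist_nonneg)
      (fun k => le_of_lt (lt_of_lt_of_le (mem_ball.1 (hy (σ k))) (min_le_right _ _)))
    have : Tendsto (fun k : ℕ => 1/((k:ℝ)+1)) atTop (𝓝 0) := tendsto_one_div_add_atTop_nhds_zero_nat
    apply this.comp hσmono.tendsto_atTop |>.congr
    intro k; simp
  have hAtend : Tendsto (fun k => A (σ k)) atTop (𝓝 Hb) := hAφ.comp hφ'.tendsto_atTop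
  have hHbmem : ∀ vv : EuclideanSpace ℝ (Fin d), vv ≠ 0 → 0 < ⟪Hb vv, vv⟫ :=
    hpd Hb ⟨fun k => y (σ k), fun k => A (σ k), fun k => hA (σ k), hytend, hAtend⟩
  have hpos := hHbmem vb (by rw [← norm_ne_zero_iff, hvbnorm]; norm_num)
  -- limit of inner products
  have hwtend : Tendsto (fun k => w (σ k)) atTop (𝓝 vb) := hvφ
  have happ : Tendsto (fun k => (A (σ k)) (w (σ k))) atTop (𝓝 (Hb vb)) := by
    have hc : Continuous fun p : (EuclideanSpace ℝ (Fin d) →L[ℝ] EuclideanSpace ℝ (Fin d)) × EuclideanSpace ℝ (Fin d) => p.1 p.2 :=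
      isBoundedBilinearMap_apply.continuous
    exact (hc.tendsto (Hb, vb)).comp (hAtend.prodMk_nhds hwtend)
  have hinner : Tendsto (fun k => ⟪(A (σ k)) (w (σ k)), w (σ k)⟫) atTop (𝓝 ⟪Hb vb, vb⟫) :=
    happ.inner hwtend
  have hle : ⟪Hb vb, vb⟫ ≤ 0 := by
    have h2 : Tendsto (fun k : ℕ => 1/((σ k:ℝ)+1)) atTop (𝓝 0) := by
      have : Tendsto (fun k : ℕ => 1/((k:ℝ)+1)) atTop (𝓝 0) := tendsto_one_div_add_atTop_nhds_zero_nat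
      exact (this.comp hσmono.tendsto_atTop).congr (fun k => by simp)
    exact le_of_tendsto_of_tendsto' hinner h2 (fun k => le_of_lt (hwineq (σ k)))
  linarith

set_option maxHeartbeats 1000000 in
private lemma key_mono {d : ℕ} (G : EuclideanSpace ℝ (Fin d) → EuclideanSpace ℝ (Fin d))
    (hGc : Continuous G) (xstar : EuclideanSpace ℝ (Fin d)) {K : ℝ≥0} {R m : ℝ}
    (hR : 0 < R)
    (hlip : LipschitzOnWith K G (ball xstar R))
    (hclaim : ∀ y ∈ ball xstar R,
      ∀ A : EuclideanSpace ℝ (Fin d) →L[ℝ] EuclideanSpace ℝ (Fin d), HasFDerivAt G A y →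
      ∀ v : EuclideanSpace ℝ (Fin d), m * ‖v‖^2 ≤ ⟪A v, v⟫)
    (w : EuclideanSpace ℝ (Fin d)) (hw : ‖w‖ < R/4) :
    m * ‖w‖^2 ≤ ⟪G (xstar + w), w⟫ - ⟪G xstar, w⟫ := by
  -- Rademacher's theorem on the ball
  have hae : ∀ᵐ z ∂(volume : Measure (EuclideanSpace ℝ (Fin d))),
      z ∈ ball xstar R → DifferentiableAt ℝ G z := by
    filter_upwards [hlip.ae_differentiableWithinAt_of_mem (μ := volume)] with z hz hzb
    exact (hz hzb).differentiableAt (isOpen_ball.mem_nhds hzb)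
  -- transported Rademacher
  have htrans : ∀ c : EuclideanSpace ℝ (Fin d), ∀ᵐ z ∂(volume : Measure (EuclideanSpace ℝ (Fin d))),
      (c - z ∈ ball xstar R → DifferentiableAt ℝ G (c - z)) := by
    intro c
    have hmp : MeasurePreserving (fun z : EuclideanSpace ℝ (Fin d) => c - z) volume volume := by
      have h1 : MeasurePreserving (fun z : EuclideanSpace ℝ (Fin d) => -z) volume volume :=
        Measure.measurePreserving_neg _
      have h2 : MeasurePreserving (fun z : EuclideanSpace ℝ (Fin d) => c + z) volume volume :=
        measurePreserving_add_left volume c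
      have := h2.comp h1
      simpa [Function.comp_def, sub_eq_add_neg] using this
    rw [ae_iff] at hae ⊢
    exact hmp.quasiMeasurePreserving.preimage_null hae
  -- fderiv norm bound on the ball
  have hfb : ∀ z ∈ ball xstar R, ‖fderiv ℝ G z‖ ≤ K := by
    intro z hz
    by_cases hdiff : DifferentiableAt ℝ G z
    · exact hdiff.hasFDerivAt.le_of_lipschitzOn (isOpen_ball.mem_nhds hz) hlip
    · rw [fderiv_zero_of_not_differentiableAt hdiff, norm_zero]; exact K.coe_nonneg
  have hwR : (0:ℝ) < R/4 := by linarith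
  -- bump widths
  set ε : ℕ → ℝ := fun n => (R/4)/(n+1) with hε
  have hεpos : ∀ n, 0 < ε n := fun n => by positivity
  have hεle : ∀ n, ε n ≤ R/4 := by
    intro n
    rw [hε]
    apply div_le_self (le_of_lt hwR)
    push_cast; linarith [Nat.cast_nonneg (α := ℝ) n]
  have main : ∀ n : ℕ, m * ‖w‖^2 - 2 * K * ‖w‖ * ε n ≤ ⟪G (xstar + w), w⟫ - ⟪G xstar, w⟫ := by
    intro n
    set ρ : ContDiffBump (0 : EuclideanSpace ℝ (Fin d)) :=
      ⟨ε n / 2, ε n, by positivity, by linarith [hεpos n]⟩ with hρ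
    set φ := ρ.normed (volume : Measure (EuclideanSpace ℝ (Fin d))) with hφ
    have hφnn : ∀ z, 0 ≤ φ z := fun z => ρ.nonneg_normed z
    have hφc : Continuous φ := ρ.continuous_normed
    have hφint : Integrable φ (volume : Measure (EuclideanSpace ℝ (Fin d))) := ρ.integrable_normed
    have hφi : ∫ z, φ z = 1 := ρ.integral_normed
    have hsupp : ∀ z, φ z ≠ 0 → ‖z‖ < ε n := by
      intro z hz
      have h1 : z ∈ Function.support φ := hz
      rw [hφ, ρ.support_normed_eq] at h1
      exact mem_ball_zero_iff.1 h1
    have hgeo : ∀ t : ℝ, |t| ≤ 2 → ∀ z, φ z ≠ 0 → xstar + t • w - z ∈ ball xstar R := by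
      intro t ht z hz
      have hzb := hsupp z hz
      rw [mem_ball, dist_eq_norm]
      have he : xstar + t • w - z - xstar = t • w - z := by abel
      rw [he]
      have h1 : ‖t • w‖ ≤ 2 * ‖w‖ := by
        rw [norm_smul, Real.norm_eq_abs]
        exact mul_le_mul_of_nonneg_right ht (norm_nonneg w)
      have hεn := hεle n
      calc ‖t • w - z‖ ≤ ‖t • w‖ + ‖z‖ := norm_sub_le _ _
        _ < 2 * ‖w‖ + ε n := by linarith
        _ ≤ R := by linarith
    set g : ℝ → EuclideanSpace ℝ (Fin d) → ℝ :=
      fun t z => φ z * ⟪G (xstar + t • w - z), w⟫ with hg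
    have hgcont : ∀ t, Continuous (g t) := by
      intro t
      apply hφc.mul
      exact (hGc.comp (continuous_const.sub continuous_id)).inner continuous_const
    have hgint : ∀ t, Integrable (g t) (volume : Measure (EuclideanSpace ℝ (Fin d))) := by
      intro t
      apply (hgcont t).integrable_of_hasCompactSupport
      apply HasCompactSupport.mul_right
      exact ρ.hasCompactSupport_normed
    set ψ : ℝ → ℝ := fun t => ∫ z, g t z with hψ
    set D : ℝ → ℝ := fun t => ∫ z, φ z * ⟪(fderiv ℝ G (xstar + t • w - z)) w, w⟫ with hD
    have hDeriv : ∀ t ∈ Icc (0:ℝ) 1, HasDerivAt ψ (D t) t := by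
      intro t ht
      have htt : |t| ≤ 2 := by rw [abs_of_nonneg ht.1]; linarith [ht.2]
      rw [hasDerivAt_iff_tendsto_slope]
      set Fq : ℝ → EuclideanSpace ℝ (Fin d) → ℝ :=
        fun s z => (g s z - g t z) * (s - t)⁻¹ with hFq
      have hmain : Tendsto (fun s => ∫ z, Fq s z) (𝓝[≠] t)
          (𝓝 (∫ z, φ z * ⟪(fderiv ℝ G (xstar + t • w - z)) w, w⟫)) := by
        apply tendsto_integral_filter_of_dominated_convergence
          (bound := fun z => φ z * ((K:ℝ) * ‖w‖^2))
        · apply Eventually.of_forall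
          intro s
          exact (((hgcont s).sub (hgcont t)).mul continuous_const).aestronglyMeasurable
        · have hball : {s : ℝ | s ∈ ball t (1/2)} ∈ 𝓝[≠] t :=
            mem_nhdsWithin_of_mem_nhds (ball_mem_nhds t (by norm_num))
          filter_upwards [hball, self_mem_nhdsWithin] with s hs hst
          apply Eventually.of_forall
          intro z
          by_cases hz : φ z = 0
          · simp [hFq, hg, hz, mul_nonneg, hφnn z]
          · have hsabs : |s| ≤ 2 := by
              have h2 := mem_ball.1 hs
              rw [Real.dist_eq] at h2
              have h3 := abs_lt.1 h2
              rw [abs_le]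
              constructor <;> linarith [ht.1, ht.2]
            have hsmem := hgeo s hsabs z hz
            have htmem := hgeo t htt z hz
            have hstne : s - t ≠ 0 := sub_ne_zero.2 hst
            have hdiffeq : g s z - g t z
                = φ z * ⟪G (xstar + s • w - z) - G (xstar + t • w - z), w⟫ := by
              rw [hg]; simp only []; rw [inner_sub_left]; ring
            rw [Real.norm_eq_abs, hFq]
            simp only []
            rw [hdiffeq, abs_mul, abs_mul, abs_of_nonneg (hφnn z)]
            have hlipb : |⟪G (xstar + s • w - z) - G (xstar + t • w - z), w⟫|
                ≤ (K:ℝ) * |s - t| * ‖w‖^2 := by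
              calc |⟪G (xstar + s • w - z) - G (xstar + t • w - z), w⟫|
                  ≤ ‖G (xstar + s • w - z) - G (xstar + t • w - z)‖ * ‖w‖ :=
                    abs_real_inner_le_norm _ _
                _ ≤ ((K:ℝ) * (|s - t| * ‖w‖)) * ‖w‖ := by
                    apply mul_le_mul_of_nonneg_right ?_ (norm_nonneg w)
                    rw [← dist_eq_norm]
                    have hd := hlip.dist_le_mul _ hsmem _ htmem
                    apply le_trans hd
                    apply mul_le_mul_of_nonneg_left ?_ K.coe_nonneg
                    rw [dist_eq_norm]
                    have he2 : xstar + s • w - z - (xstar + t • w - z) = (s - t) • w := by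
                      rw [sub_smul]; abel
                    rw [he2, norm_smul, Real.norm_eq_abs]
                _ = (K:ℝ) * |s - t| * ‖w‖^2 := by ring
            calc φ z * |⟪G (xstar + s • w - z) - G (xstar + t • w - z), w⟫| * |(s - t)⁻¹|
                ≤ φ z * ((K:ℝ) * |s - t| * ‖w‖^2) * |s - t|⁻¹ := by
                  rw [abs_inv]
                  exact mul_le_mul_of_nonneg_right
                    (mul_le_mul_of_nonneg_left hlipb (hφnn z)) (by positivity)
              _ = φ z * ((K:ℝ) * ‖w‖^2) * (|s - t| * |s - t|⁻¹) := by ring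
              _ = φ z * ((K:ℝ) * ‖w‖^2) := by
                  rw [mul_inv_cancel₀ (abs_ne_zero.2 hstne), mul_one]
        · exact hφint.mul_const _
        · filter_upwards [htrans (xstar + t • w)] with z hz
          by_cases hzφ : φ z = 0
          · have hzero : (fun s => Fq s z) = fun _ => (0:ℝ) := by
              funext s; simp [hFq, hg, hzφ]
            rw [hzero, hzφ, zero_mul]
            exact tendsto_const_nhds
          · have hmem := hgeo t htt z hzφ
            have hmem' : xstar + t • w - z ∈ ball xstar R := hmem
            have hdiffz := hz hmem'
            have hline : HasDerivAt (fun s : ℝ => xstar + s • w - z) w t := by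
              have h1 : HasDerivAt (fun s : ℝ => s • w) ((1:ℝ) • w) t :=
                (hasDerivAt_id t).smul_const w
              simpa using (h1.const_add xstar).sub_const z
            have hcomp : HasDerivAt (fun s => G (xstar + s • w - z))
                ((fderiv ℝ G (xstar + t • w - z)) w) t :=
              hdiffz.hasFDerivAt.comp_hasDerivAt t hline
            have hη : HasDerivAt (fun s => ⟪G (xstar + s • w - z), w⟫)
                ⟪(fderiv ℝ G (xstar + t • w - z)) w, w⟫ t := by
              have h3 := hcomp.inner (𝕜 := ℝ) (hasDerivAt_const t w)
              simpa using h3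
            have hslope := hasDerivAt_iff_tendsto_slope.1 hη
            have h4 := hslope.const_mul (φ z)
            apply h4.congr
            intro s
            rw [slope_def_field, hFq, hg]
            simp only []
            field_simp
      apply Tendsto.congr' ?_ hmain
      filter_upwards [self_mem_nhdsWithin] with s hst
      rw [slope_def_field, div_eq_mul_inv, hψ]
      simp only []
      rw [← integral_sub (hgint s) (hgint t), ← integral_mul_const]
    have hDle : ∀ t ∈ Icc (0:ℝ) 1, m * ‖w‖^2 ≤ D t := by
      intro t ht
      have htt : |t| ≤ 2 := by rw [abs_of_nonneg ht.1]; linarith [ht.2]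
      have hmeas : AEStronglyMeasurable
          (fun z => φ z * ⟪(fderiv ℝ G (xstar + t • w - z)) w, w⟫)
          (volume : Measure (EuclideanSpace ℝ (Fin d))) := by
        apply Measurable.aestronglyMeasurable
        apply hφc.measurable.mul
        have h1 : Measurable fun z : EuclideanSpace ℝ (Fin d) => xstar + t • w - z :=
          measurable_const.sub measurable_id
        have h2 : Measurable fun y : EuclideanSpace ℝ (Fin d) => (fderiv ℝ G y) w :=
          measurable_fderiv_apply_const (𝕜 := ℝ) (f := G) w
        exact (h2.comp h1).inner measurable_const
      have hintD : Integrable (fun z => φ z * ⟪(fderiv ℝ G (xstar + t • w - z)) w, w⟫)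
          (volume : Measure (EuclideanSpace ℝ (Fin d))) := by
        apply Integrable.mono' (hφint.mul_const ((K:ℝ) * ‖w‖^2)) hmeas
        apply Eventually.of_forall
        intro z
        by_cases hz : φ z = 0
        · simp [hz]
        · rw [Real.norm_eq_abs, abs_mul, abs_of_nonneg (hφnn z)]
          apply mul_le_mul_of_nonneg_left ?_ (hφnn z)
          have hmem := hgeo t htt z hz
          calc |⟪(fderiv ℝ G (xstar + t • w - z)) w, w⟫|
              ≤ ‖(fderiv ℝ G (xstar + t • w - z)) w‖ * ‖w‖ := abs_real_inner_le_norm _ _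
            _ ≤ (‖fderiv ℝ G (xstar + t • w - z)‖ * ‖w‖) * ‖w‖ :=
                mul_le_mul_of_nonneg_right ((fderiv ℝ G _).le_opNorm w) (norm_nonneg w)
            _ ≤ ((K:ℝ) * ‖w‖) * ‖w‖ :=
                mul_le_mul_of_nonneg_right
                  (mul_le_mul_of_nonneg_right (hfb _ hmem) (norm_nonneg w)) (norm_nonneg w)
            _ = (K:ℝ) * ‖w‖^2 := by ring
      have hmono : (fun z => φ z * (m * ‖w‖^2)) ≤ᵐ[volume]
          fun z => φ z * ⟪(fderiv ℝ G (xstar + t • w - z)) w, w⟫ := by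
        filter_upwards [htrans (xstar + t • w)] with z hz
        by_cases hzφ : φ z = 0
        · simp [hzφ]
        · have hmem := hgeo t htt z hzφ
          have hdiff := hz hmem
          have h5 := hclaim _ hmem _ hdiff.hasFDerivAt w
          exact mul_le_mul_of_nonneg_left h5 (hφnn z)
      have h6 := integral_mono_ae (hφint.mul_const _) hintD hmono
      calc m * ‖w‖^2 = ∫ z, φ z * (m * ‖w‖^2) := by rw [integral_mul_const, hφi, one_mul]
        _ ≤ D t := h6
    have hcont : ContinuousOn ψ (Icc 0 1) :=
      fun t ht => ((hDeriv t ht).continuousAt).continuousWithinAt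
    obtain ⟨c, hc, hceq⟩ := exists_hasDerivAt_eq_slope ψ D (by norm_num : (0:ℝ) < 1) hcont
      (fun t ht => hDeriv t ⟨le_of_lt ht.1, le_of_lt ht.2⟩)
    have hc1 : m * ‖w‖^2 ≤ ψ 1 - ψ 0 := by
      have h7 := hDle c ⟨le_of_lt hc.1, le_of_lt hc.2⟩
      rw [hceq] at h7
      simpa using h7
    have hend : ∀ t : ℝ, |t| ≤ 2 →
        |ψ t - ⟪G (xstar + t • w), w⟫| ≤ (K:ℝ) * ‖w‖ * ε n := by
      intro t ht
      have hhint : Integrable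
          (fun z => φ z * (⟪G (xstar + t • w - z), w⟫ - ⟪G (xstar + t • w), w⟫))
          (volume : Measure (EuclideanSpace ℝ (Fin d))) := by
        apply Integrable.congr ((hgint t).sub (hφint.mul_const ⟪G (xstar + t • w), w⟫))
        apply Eventually.of_forall
        intro z
        simp only [Pi.sub_apply]
        ring
      have heq : ψ t - ⟪G (xstar + t • w), w⟫
          = ∫ z, φ z * (⟪G (xstar + t • w - z), w⟫ - ⟪G (xstar + t • w), w⟫) := by
        have h1 : ∫ z, φ z * ⟪G (xstar + t • w), w⟫ = ⟪G (xstar + t • w), w⟫ := by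
          rw [integral_mul_const, hφi, one_mul]
        have h2 : (fun z => φ z * (⟪G (xstar + t • w - z), w⟫ - ⟪G (xstar + t • w), w⟫))
            = fun z => g t z - φ z * ⟪G (xstar + t • w), w⟫ := by
          funext z; ring
        rw [h2, integral_sub (hgint t) (hφint.mul_const _), h1]
      rw [heq]
      have hb : ∀ z, |φ z * (⟪G (xstar + t • w - z), w⟫ - ⟪G (xstar + t • w), w⟫)|
          ≤ φ z * ((K:ℝ) * ‖w‖ * ε n) := by
        intro z
        by_cases hz : φ z = 0
        · simp [hz]
        · have hzb := hsupp z hz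
          have hmem1 := hgeo t ht z hz
          have hmem2 : xstar + t • w ∈ ball xstar R := by
            rw [mem_ball, dist_eq_norm]
            have he3 : xstar + t • w - xstar = t • w := by abel
            rw [he3, norm_smul, Real.norm_eq_abs]
            have : |t| * ‖w‖ ≤ 2 * ‖w‖ := mul_le_mul_of_nonneg_right ht (norm_nonneg w)
            linarith
          rw [abs_mul, abs_of_nonneg (hφnn z)]
          apply mul_le_mul_of_nonneg_left ?_ (hφnn z)
          rw [← inner_sub_left]
          calc |⟪G (xstar + t • w - z) - G (xstar + t • w), w⟫|
              ≤ ‖G (xstar + t • w - z) - G (xstar + t • w)‖ * ‖w‖ := abs_real_inner_le_norm _ _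
            _ ≤ ((K:ℝ) * ‖z‖) * ‖w‖ := by
                apply mul_le_mul_of_nonneg_right ?_ (norm_nonneg w)
                rw [← dist_eq_norm]
                apply le_trans (hlip.dist_le_mul _ hmem1 _ hmem2)
                apply mul_le_mul_of_nonneg_left ?_ K.coe_nonneg
                rw [dist_eq_norm]
                have he4 : xstar + t • w - z - (xstar + t • w) = -z := by abel
                rw [he4, norm_neg]
            _ ≤ (K:ℝ) * ‖w‖ * ε n := by
                have h8 : (K:ℝ) * ‖z‖ ≤ (K:ℝ) * ε n :=
                  mul_le_mul_of_nonneg_left (le_of_lt hzb) K.coe_nonneg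
                nlinarith [norm_nonneg w, K.coe_nonneg]
      have habs : |∫ z, φ z * (⟪G (xstar + t • w - z), w⟫ - ⟪G (xstar + t • w), w⟫)|
          ≤ ∫ z, |φ z * (⟪G (xstar + t • w - z), w⟫ - ⟪G (xstar + t • w), w⟫)| := by
        have h9 := norm_integral_le_integral_norm
          (μ := (volume : Measure (EuclideanSpace ℝ (Fin d))))
          (fun z => φ z * (⟪G (xstar + t • w - z), w⟫ - ⟪G (xstar + t • w), w⟫))
        simp only [Real.norm_eq_abs] at h9
        exact h9
      calc |∫ z, φ z * (⟪G (xstar + t • w - z), w⟫ - ⟪G (xstar + t • w), w⟫)|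
          ≤ ∫ z, |φ z * (⟪G (xstar + t • w - z), w⟫ - ⟪G (xstar + t • w), w⟫)| := habs
        _ ≤ ∫ z, φ z * ((K:ℝ) * ‖w‖ * ε n) :=
            integral_mono hhint.abs (hφint.mul_const _) hb
        _ = (K:ℝ) * ‖w‖ * ε n := by rw [integral_mul_const, hφi, one_mul]
    have h1 := abs_le.1 (hend 1 (by norm_num))
    have h0 := abs_le.1 (hend 0 (by norm_num))
    rw [one_smul] at h1
    rw [zero_smul, add_zero] at h0
    linarith [h1.1, h1.2, h0.1, h0.2, hc1]
  have htend : Tendsto (fun n : ℕ => m * ‖w‖^2 - 2 * K * ‖w‖ * ε n) atTop (𝓝 (m * ‖w‖^2)) := by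
    have h0 : Tendsto ε atTop (𝓝 0) := by
      have h1 := tendsto_one_div_add_atTop_nhds_zero_nat.const_mul (R/4)
      rw [mul_zero] at h1
      apply h1.congr
      intro n; rw [hε]; field_simp
    have h2 : Tendsto (fun n : ℕ => m * ‖w‖^2) atTop (𝓝 (m * ‖w‖^2)) := tendsto_const_nhds
    have h3 := h2.sub (h0.const_mul (2 * (K:ℝ) * ‖w‖))
    rw [mul_zero, sub_zero] at h3
    exact h3
  exact le_of_tendsto_of_tendsto' htend tendsto_const_nhds main

/-- Second-order sufficient condition via the Clarke generalized Jacobian of the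
gradient: if `∇F(x_*) = 0` and every element of `∂(∇F)(x_*)` is positive definite,
then `x_*` is a strict local minimum with quadratic growth. -/
theorem stmt_18 {d : ℕ} (F : EuclideanSpace ℝ (Fin d) → ℝ)
    (hF : ContDiff ℝ 1 F)
    (hlip : ∀ x : EuclideanSpace ℝ (Fin d),
      ∃ (K : NNReal) (U : Set (EuclideanSpace ℝ (Fin d))),
        U ∈ nhds x ∧ LipschitzOnWith K (fun y => gradient F y) U)
    (xstar : EuclideanSpace ℝ (Fin d)) (hcrit : gradient F xstar = 0)
    (hpd : ∀ Hm ∈ convexHull ℝ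
      {Hb : EuclideanSpace ℝ (Fin d) →L[ℝ] EuclideanSpace ℝ (Fin d) |
        ∃ (u : ℕ → EuclideanSpace ℝ (Fin d))
          (A : ℕ → EuclideanSpace ℝ (Fin d) →L[ℝ] EuclideanSpace ℝ (Fin d)),
          (∀ k, HasFDerivAt (fun y => gradient F y) (A k) (u k)) ∧
          Filter.Tendsto u Filter.atTop (nhds xstar) ∧
          Filter.Tendsto A Filter.atTop (nhds Hb)},
      ∀ v : EuclideanSpace ℝ (Fin d), v ≠ 0 → 0 < (inner ℝ (Hm v) v : ℝ)) :
    (∃ U ∈ nhds xstar, ∀ x ∈ U, x ≠ xstar → F xstar < F x) ∧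
    ∃ ω > (0 : ℝ), ∃ U ∈ nhds xstar, ∀ x ∈ U, ω * ‖x - xstar‖ ^ 2 ≤ F x - F xstar := by
  classical
  set G : EuclideanSpace ℝ (Fin d) → EuclideanSpace ℝ (Fin d) := fun y => gradient F y with hG
  have hFdiff : Differentiable ℝ F := hF.differentiable one_ne_zero
  have hfd : ∀ y, (InnerProductSpace.toDual ℝ (EuclideanSpace ℝ (Fin d))) (G y) = fderiv ℝ F y :=
    fun y => (InnerProductSpace.toDual ℝ _).apply_symm_apply (fderiv ℝ F y)
  have hinner : ∀ y v, (fderiv ℝ F y) v = ⟪G y, v⟫ := by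
    intro y v
    rw [← hfd y]
    rfl
  have hGc : Continuous G := by
    have h1 : Continuous (fderiv ℝ F) := hF.continuous_fderiv one_ne_zero
    exact (InnerProductSpace.toDual ℝ (EuclideanSpace ℝ (Fin d))).symm.continuous.comp h1
  obtain ⟨K, U, hU, hlipU⟩ := hlip xstar
  obtain ⟨R0, hR0, hballU⟩ := Metric.mem_nhds_iff.1 hU
  have hlipB : LipschitzOnWith K G (ball xstar R0) := hlipU.mono hballU
  have hpd' : ∀ Hb : EuclideanSpace ℝ (Fin d) →L[ℝ] EuclideanSpace ℝ (Fin d),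
      (∃ (u : ℕ → EuclideanSpace ℝ (Fin d))
          (A : ℕ → EuclideanSpace ℝ (Fin d) →L[ℝ] EuclideanSpace ℝ (Fin d)),
          (∀ k, HasFDerivAt G (A k) (u k)) ∧
          Tendsto u atTop (𝓝 xstar) ∧ Tendsto A atTop (𝓝 Hb)) →
      ∀ v : EuclideanSpace ℝ (Fin d), v ≠ 0 → 0 < ⟪Hb v, v⟫ := by
    intro Hb hHb
    exact hpd Hb (subset_convexHull ℝ _ hHb)
  obtain ⟨m, hm, R, hR, hRle, hclaim⟩ := unif_pd G xstar hR0 hlipB hpd'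
  have hlipR : LipschitzOnWith K G (ball xstar R) := hlipB.mono (ball_subset_ball hRle)
  have hG0 : G xstar = 0 := hcrit
  have key2 : ∀ w : EuclideanSpace ℝ (Fin d), ‖w‖ < R/4 → m * ‖w‖^2 ≤ ⟪G (xstar + w), w⟫ := by
    intro w hw
    have h2 := key_mono G hGc xstar hR hlipR hclaim w hw
    rw [hG0] at h2
    simpa using h2
  have main : ∀ x ∈ ball xstar (R/4), (m/2) * ‖x - xstar‖^2 ≤ F x - F xstar := by
    intro x hx
    set u : EuclideanSpace ℝ (Fin d) := x - xstar with hu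
    have hun : ‖u‖ < R/4 := by
      rw [hu, ← dist_eq_norm]
      exact mem_ball.1 hx
    have hderiv : ∀ t ∈ uIcc (0:ℝ) 1,
        HasDerivAt (fun s => F (xstar + s • u)) ⟪G (xstar + t • u), u⟫ t := by
      intro t _
      have hline : HasDerivAt (fun s : ℝ => xstar + s • u) u t := by
        have h1 : HasDerivAt (fun s : ℝ => s • u) ((1:ℝ) • u) t := (hasDerivAt_id t).smul_const u
        simpa using h1.const_add xstar
      have hcomp := (hFdiff (xstar + t • u)).hasFDerivAt.comp_hasDerivAt t hline
      rwa [hinner] at hcomp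
    have hcont : Continuous fun t : ℝ => ⟪G (xstar + t • u), u⟫ :=
      (hGc.comp (continuous_const.add (continuous_id.smul continuous_const))).inner
        continuous_const
    have hFTC := intervalIntegral.integral_eq_sub_of_hasDerivAt hderiv
      (hcont.intervalIntegrable 0 1)
    have hlow : ∀ t ∈ Icc (0:ℝ) 1, m * ‖u‖^2 * t ≤ ⟪G (xstar + t • u), u⟫ := by
      intro t ht
      rcases eq_or_lt_of_le ht.1 with h0 | h0
      · rw [← h0]
        simp [hG0]
      · have htu : ‖t • u‖ < R/4 := by
          rw [norm_smul, Real.norm_eq_abs, abs_of_pos h0]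
          calc t * ‖u‖ ≤ 1 * ‖u‖ := mul_le_mul_of_nonneg_right ht.2 (norm_nonneg u)
            _ = ‖u‖ := one_mul _
            _ < R/4 := hun
        have h3 := key2 (t • u) htu
        rw [real_inner_smul_right, norm_smul, Real.norm_eq_abs, abs_of_pos h0] at h3
        nlinarith [h3]
    have hintineq : ∫ t in (0:ℝ)..1, m * ‖u‖^2 * t ≤ ∫ t in (0:ℝ)..1, ⟪G (xstar + t • u), u⟫ := by
      apply intervalIntegral.integral_mono_on (by norm_num)
        ((continuous_const.mul continuous_id).intervalIntegrable 0 1)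
        (hcont.intervalIntegrable 0 1) hlow
    have hval : ∫ t in (0:ℝ)..1, m * ‖u‖^2 * t = m * ‖u‖^2 / 2 := by
      rw [intervalIntegral.integral_const_mul, integral_id]
      ring
    rw [hval, hFTC] at hintineq
    have he1 : xstar + (1:ℝ) • u = x := by rw [one_smul, hu]; abel
    have he0 : xstar + (0:ℝ) • u = xstar := by rw [zero_smul, add_zero]
    rw [he1, he0] at hintineq
    linarith
  have hUn : ball xstar (R/4) ∈ 𝓝 xstar := ball_mem_nhds xstar (by linarith)
  constructor
  · refine ⟨ball xstar (R/4), hUn, ?_⟩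
    intro x hx hne
    have h4 := main x hx
    have h5 : (0:ℝ) < ‖x - xstar‖^2 :=
      pow_pos (norm_pos_iff.2 (sub_ne_zero.2 hne)) 2
    nlinarith
  · exact ⟨m/2, by linarith, ball xstar (R/4), hUn, main⟩
end
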